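/- arXiv:1712.06051 — 10 statements merged into one kernel-verified Lean document; each statement's English description precedes it below -/
import Mathlib

section
/- Let A be a finite dimensional graded symmetric algebra over a field K admitting homogeneous symmetrizing traces τ of degree d and ρ of degree d'. If A is in addition a graded cellular algebra and d ≠ 0, then d = d'. (More precisely: any two homogeneous symmetrizing traces on a finite dimensional graded symmetric cellular algebra have the same degree.) -/
open scoped Classical

/-- Theorem 3.4(1): two homogeneous symmetrizing traces on a finite dimensional
graded symmetric cellular algebra have the same degree, provided one degree is nonzero. -/
theorem stmt2
    {K A : Type} [Field K] [Ring A] [Algebra K A] [FiniteDimensional K A]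
    {Λ : Type} [PartialOrder Λ] [Fintype Λ]
    {M : Λ → Type} [∀ l : Λ, Fintype (M l)]
    (C : ∀ l : Λ, M l → M l → A)
    (bas : Module.Basis (Σ l : Λ, M l × M l) K A)
    (hbas : ∀ (l : Λ) (S T : M l), bas ⟨l, (S, T)⟩ = C l S T)
    (star : A →ₗ[K] A)
    (hstar : ∀ a b : A, star (a * b) = star b * star a)
    (hstarC : ∀ (l : Λ) (S T : M l), star (C l S T) = C l T S)
    (hcell : ∀ (a : A) (l : Λ), ∃ r : M l → M l → K, ∀ S T : M l,
      a * C l S T - ∑ S' : M l, r S' S • C l S' T ∈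
        Submodule.span K {x : A | ∃ μ : Λ, μ < l ∧ ∃ U V : M μ, x = C μ U V})
    [Nontrivial A]
    (𝒜 : ℤ → Submodule K A) [GradedAlgebra 𝒜]
    (deg : ∀ l : Λ, M l → ℤ)
    (hhom : ∀ (l : Λ) (S T : M l), C l S T ∈ 𝒜 (deg l S + deg l T))
    (τ ρ : A →ₗ[K] K)
    (hτsym : ∀ a b : A, τ (a * b) = τ (b * a))
    (hτnd : ∀ a : A, a ≠ 0 → ∃ b : A, τ (a * b) ≠ 0)
    (hρsym : ∀ a b : A, ρ (a * b) = ρ (b * a))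
    (hρnd : ∀ a : A, a ≠ 0 → ∃ b : A, ρ (a * b) ≠ 0)
    (d d' : ℤ)
    (hτhom : ∀ i : ℤ, i ≠ -d → ∀ a ∈ 𝒜 i, τ a = 0)
    (hρhom : ∀ i : ℤ, i ≠ -d' → ∀ a ∈ 𝒜 i, ρ a = 0)
    (hd : d ≠ 0) :
    d = d' := by
  by_contra hne
  set k : ℤ := d' - d with hkdef
  have hk0 : k ≠ 0 := sub_ne_zero.mpr fun h => hne h.symm
  -- Step 1: find `u` with `τ (u * a) = ρ a` for all `a`.
  have hu : ∃ u : A, ∀ a : A, τ (u * a) = ρ a := by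
    let Φ : A →ₗ[K] Module.Dual K A := (LinearMap.mul K A).compr₂ τ
    have hΦinj : Function.Injective Φ := by
      rw [← LinearMap.ker_eq_bot]
      rw [Submodule.eq_bot_iff]
      intro u hu
      by_contra h0
      obtain ⟨b, hb⟩ := hτnd u h0
      exact hb (congrFun (congrArg (fun f => f.toFun) hu) b)
    have hΦsurj : Function.Surjective Φ := by
      rw [← LinearMap.injective_iff_surjective_of_finrank_eq_finrank
        (Subspace.dual_finrank_eq (K := K) (V := A)).symm]
      exact hΦinj
    obtain ⟨u, huu⟩ := hΦsurj ρ
    exact ⟨u, fun a => congrFun (congrArg (fun f => f.toFun) huu) a⟩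
  obtain ⟨u, hu⟩ := hu
  -- the degree-k component of u
  set v : A := (DirectSum.decompose 𝒜 u k : A) with hvdef
  have hv𝒜 : v ∈ 𝒜 k := SetLike.coe_mem _
  -- Step 2: `τ (v * a) = ρ a` for all `a`.
  have key : ∀ a : A, τ (v * a) = ρ a := by
    intro a
    induction a using DirectSum.Decomposition.inductionOn 𝒜 with
    | zero => simp
    | add x y hx hy => rw [mul_add, map_add, map_add, hx, hy]
    | homogeneous m' =>
      rename_i i'
      by_cases hi : (i' : ℤ) = -d'
      · -- homogeneous of degree -d'
        have hm : (m' : A) ∈ 𝒜 (-d') := hi ▸ m'.2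
        have step : ∀ u' : A, τ ((DirectSum.decompose 𝒜 u' k : A) * (m' : A)) =
            τ (u' * (m' : A)) := by
          intro u'
          induction u' using DirectSum.Decomposition.inductionOn 𝒜 with
          | zero => simp
          | add x y hx hy =>
            rw [DirectSum.decompose_add, DirectSum.add_apply, Submodule.coe_add,
              add_mul, map_add, hx, hy, add_mul, map_add]
          | homogeneous w' =>
            rename_i j
            by_cases hj : (j : ℤ) = k
            · rw [DirectSum.decompose_of_mem_same 𝒜 (hj ▸ w'.2 : (w' : A) ∈ 𝒜 k)]
            · rw [DirectSum.decompose_of_mem_ne 𝒜 w'.2 hj, zero_mul, map_zero]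
              have hmem : (w' : A) * (m' : A) ∈ 𝒜 ((j : ℤ) + -d') :=
                SetLike.mul_mem_graded w'.2 hm
              have : (j : ℤ) + -d' ≠ -d := by
                intro h
                apply hj
                omega
              exact (hτhom _ this _ hmem).symm
        rw [step, hu]
      · -- homogeneous of degree ≠ -d' : both sides vanish
        have h1 : ρ (m' : A) = 0 := hρhom _ hi _ m'.2
        have hmem : v * (m' : A) ∈ 𝒜 (k + i') := SetLike.mul_mem_graded hv𝒜 m'.2
        have h2 : k + i' ≠ -d := by
          intro h
          apply hi
          omega
        rw [hτhom _ h2 _ hmem, h1]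
  -- Step 3: `v` has a right inverse.
  have hinj : Function.Injective (LinearMap.mulLeft K v) := by
    rw [← LinearMap.ker_eq_bot, Submodule.eq_bot_iff]
    intro b hb
    by_contra hb0
    obtain ⟨c, hc⟩ := hρnd b hb0
    apply hc
    rw [← key, ← mul_assoc]
    have hvb : v * b = 0 := hb
    rw [hvb, zero_mul, map_zero]
  obtain ⟨w, hw⟩ := (LinearMap.injective_iff_surjective.mp hinj) 1
  have hvw : v * w = 1 := hw
  -- Step 4: powers of `v` are nonzero.
  have hpow1 : ∀ n : ℕ, v ^ n * w ^ n = 1 := by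
    intro n
    induction n with
    | zero => simp
    | succ n ih =>
      rw [pow_succ, pow_succ', mul_assoc, ← mul_assoc v, hvw, one_mul, ih]
  have hpne : ∀ n : ℕ, v ^ n ≠ 0 := by
    intro n h
    have := hpow1 n
    rw [h, zero_mul] at this
    exact one_ne_zero this.symm
  -- Step 5: powers of `v` are homogeneous of distinct degrees, giving independence.
  have hpmem : ∀ n : ℕ, v ^ n ∈ 𝒜 (n • k) := fun n => SetLike.pow_mem_graded n hv𝒜
  have hli : LinearIndependent K (fun n : ℕ => v ^ n) := by
    rw [linearIndependent_iff']
    intro s g hsum i hi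
    let π : A →ₗ[K] A :=
      (𝒜 (i • k)).subtype ∘ₗ (DirectSum.component K ℤ (fun j => 𝒜 j) (i • k)) ∘ₗ
        (DirectSum.decomposeLinearEquiv 𝒜).toLinearMap
    have hπ : ∀ x : A, π x = (DirectSum.decompose 𝒜 x (i • k) : A) := fun x => rfl
    have h0 : π (∑ j ∈ s, g j • v ^ j) = 0 := by rw [hsum, map_zero]
    rw [map_sum] at h0
    have hterm : ∀ j ∈ s, π (g j • v ^ j) = if j = i then g i • v ^ i else 0 := by
      intro j _
      rw [map_smul, hπ]
      by_cases hji : j = i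
      · subst hji
        rw [DirectSum.decompose_of_mem_same 𝒜 (hpmem j), if_pos rfl]
      · have hne' : (j • k : ℤ) ≠ i • k := by
          rw [nsmul_eq_mul, nsmul_eq_mul]
          intro h
          exact hji (Nat.cast_injective (mul_right_cancel₀ hk0 h))
        rw [DirectSum.decompose_of_mem_ne 𝒜 (hpmem j) hne', smul_zero, if_neg hji]
    rw [Finset.sum_congr rfl hterm, Finset.sum_ite_eq' s i (fun _ => g i • v ^ i),
      if_pos hi] at h0
    rcases smul_eq_zero.mp h0 with h | h
    · exact h
    · exact absurd h (hpne i)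
  exact Module.Finite.not_linearIndependent_of_infinite _ hli
end

section
/- Let A be a finite dimensional graded symmetric cellular algebra with homogeneous symmetrizing trace τ of degree d ≠ 0. Then the Higman ideal H(A) is contained in the homogeneous component A_{-d}, and dim_K H(A) ≤ dim_K A_0. -/
open scoped Classical

theorem aux
    {K A : Type} [Field K] [Ring A] [Algebra K A] [FiniteDimensional K A]
    {P : Type} [Fintype P]
    (x y : P → A)
    (bas : Module.Basis P K A) (hbas : ∀ p, bas p = x p)
    (τ : A →ₗ[K] K)
    (hτsym : ∀ a b : A, τ (a * b) = τ (b * a))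
    (hτnd : ∀ a : A, a ≠ 0 → ∃ b : A, τ (a * b) ≠ 0)
    (pair : ∀ p q : P, τ (x p * y q) = if p = q then 1 else 0)
    (𝒜 : ℤ → Submodule K A) [GradedAlgebra 𝒜]
    (e : P → ℤ) (hx : ∀ p, x p ∈ 𝒜 (e p))
    (d : ℤ)
    (hτhom : ∀ i : ℤ, i ≠ -d → ∀ a ∈ 𝒜 i, τ a = 0)
    (hd : d ≠ 0) :
    (∀ a : A, (∑ p : P, x p * a * y p) ∈ 𝒜 (-d)) ∧
    Module.finrank K (Submodule.span K {z : A | ∃ a : A, z = ∑ p : P, x p * a * y p}) ≤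
      Module.finrank K (𝒜 0) := by
  classical
  -- nondegeneracy via the basis x
  have hzero : ∀ w : A, (∀ p, τ (x p * w) = 0) → w = 0 := by
    intro w hw
    by_contra hne
    obtain ⟨b, hb⟩ := hτnd w hne
    apply hb
    rw [hτsym]
    have hℓ : (τ ∘ₗ LinearMap.mulRight K w) = 0 := by
      apply bas.ext
      intro p
      simp only [LinearMap.comp_apply, LinearMap.mulRight_apply, LinearMap.zero_apply, hbas]
      exact hw p
    have := congrArg (fun f : A →ₗ[K] K => f b) hℓ
    simpa using this
  -- key degree-extraction lemma
  have key : ∀ (v : A) (q : P),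
      τ (x q * v) = τ (x q * (DirectSum.decompose 𝒜 v (-d - e q) : A)) := by
    intro v q
    conv_lhs => rw [← DirectSum.sum_support_decompose 𝒜 v]
    rw [Finset.mul_sum, map_sum]
    refine Finset.sum_eq_single (-d - e q) ?_ ?_
    · intro i _ hne
      exact hτhom (e q + i) (by omega) _
        (SetLike.mul_mem_graded (hx q) (SetLike.coe_mem _))
    · intro h
      rw [DFinsupp.notMem_support_iff.mp h]
      simp
  -- homogeneity of the dual family
  have hy : ∀ p, y p ∈ 𝒜 (-d - e p) := by
    intro p
    have hw : y p - (DirectSum.decompose 𝒜 (y p) (-d - e p) : A) = 0 := by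
      apply hzero
      intro q
      rw [mul_sub, map_sub]
      by_cases hq : e q = e p
      · rw [key (y p) q, hq, sub_self]
      · have h1 : τ (x q * y p) = 0 := by
          rw [pair]
          have : q ≠ p := fun h => hq (by rw [h])
          simp [this]
        have h2 : τ (x q * (DirectSum.decompose 𝒜 (y p) (-d - e p) : A)) = 0 :=
          hτhom (e q + (-d - e p)) (by omega) _
            (SetLike.mul_mem_graded (hx q) (SetLike.coe_mem _))
        rw [h1, h2, sub_self]
    rw [sub_eq_zero] at hw
    rw [hw]
    exact SetLike.coe_mem _
  -- y expansion
  have hyrep : ∀ v : A, v = ∑ q, τ (x q * v) • y q := by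
    intro v
    have h0 : v - ∑ q, τ (x q * v) • y q = 0 := by
      apply hzero
      intro p
      rw [mul_sub, map_sub, Finset.mul_sum, map_sum]
      simp only [mul_smul_comm, map_smul, smul_eq_mul, pair, mul_ite, mul_one, mul_zero,
        Finset.sum_ite_eq, Finset.mem_univ, if_true]
      exact sub_self _
    exact (sub_eq_zero.mp h0)
  -- y is a basis
  have hyli : LinearIndependent K y := by
    rw [Fintype.linearIndependent_iff]
    intro g hg p
    have h := congrArg (fun w => τ (x p * w)) hg
    simpa only [Finset.mul_sum, mul_smul_comm, map_sum, map_smul, smul_eq_mul, pair, mul_ite,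
      mul_one, mul_zero, Finset.sum_ite_eq, Finset.mem_univ, if_true, map_zero] using h
  have hysp : ⊤ ≤ Submodule.span K (Set.range y) := by
    intro v _
    rw [hyrep v]
    exact Submodule.sum_mem _ fun q _ =>
      Submodule.smul_mem _ _ (Submodule.subset_span ⟨q, rfl⟩)
  obtain ⟨yB, hyB⟩ : ∃ yB : Module.Basis P K A, ∀ p, yB p = y p :=
    ⟨Module.Basis.mk hyli hysp, fun p => Module.Basis.mk_apply hyli hysp p⟩
  have hrepr : ∀ (v : A) (p : P), yB.repr v p = τ (x p * v) := by
    intro v p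
    have h := congrArg (fun w => τ (x p * w)) (yB.sum_repr v)
    simpa only [Finset.mul_sum, hyB, mul_smul_comm, map_sum, map_smul, smul_eq_mul, pair,
      mul_ite, mul_one, mul_zero, Finset.sum_ite_eq, Finset.mem_univ, if_true] using h
  -- trace formula and nilpotency
  have htrace : ∀ b c : A, IsNilpotent b → ∑ p, τ (x p * (b * (y p * c))) = 0 := by
    intro b c hb
    set φ : Module.End K A := (LinearMap.mulLeft K b) ∘ₗ (LinearMap.mulRight K c) with hφdef
    have hφap : ∀ v : A, φ v = b * (v * c) := fun v => rfl
    have h1 : LinearMap.trace K A φ = ∑ p, τ (x p * (b * (y p * c))) := by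
      rw [LinearMap.trace_eq_matrix_trace K yB φ, Matrix.trace]
      refine Finset.sum_congr rfl fun p _ => ?_
      rw [Matrix.diag_apply, LinearMap.toMatrix_apply, hyB, hrepr, hφap]
    have hpow : ∀ (n : ℕ) (v : A), (φ ^ n) v = b ^ n * (v * c ^ n) := by
      intro n
      induction n with
      | zero => intro v; simp
      | succ n ih =>
        intro v
        rw [pow_succ, Module.End.mul_apply, ih, hφap, pow_succ b n, pow_succ' c n]
        simp only [mul_assoc]
    have hφnil : IsNilpotent φ := by
      obtain ⟨n, hn⟩ := hb
      exact ⟨n, LinearMap.ext fun v => by simp [hpow n v, hn]⟩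
    rw [← h1]
    exact IsNilpotent.eq_zero (LinearMap.isNilpotent_trace_of_isNilpotent hφnil)
  -- nilpotency of homogeneous elements of nonzero degree
  have hnil : ∀ (j : ℤ), j ≠ 0 → ∀ b ∈ 𝒜 j, IsNilpotent b := by
    intro j hj b hb
    have hli := Module.Finite.not_linearIndependent_of_infinite (R := K) (fun n : ℕ => b ^ n)
    rw [linearIndependent_iff] at hli
    push_neg at hli
    obtain ⟨l, hl0, hlne⟩ := hli
    obtain ⟨n, hn⟩ : ∃ n, l n ≠ 0 := by
      by_contra h
      push_neg at h
      exact hlne (Finsupp.ext h)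
    refine ⟨n, ?_⟩
    have hbm : ∀ m : ℕ, b ^ m ∈ 𝒜 (m • j) := fun m => SetLike.pow_mem_graded m hb
    have hinj : ∀ m : ℕ, m ≠ n → (m • j : ℤ) ≠ n • j := by
      intro m hm
      simp only [nsmul_eq_mul]
      intro hc
      exact hm (Nat.cast_injective (mul_right_cancel₀ hj hc))
    rw [Finsupp.linearCombination_apply, Finsupp.sum] at hl0
    have h3 := congrArg (GradedAlgebra.proj 𝒜 (n • j)) hl0
    rw [map_sum, map_zero] at h3
    have h4 : ∀ m ∈ l.support, m ≠ n →
        GradedAlgebra.proj 𝒜 (n • j) (l m • b ^ m) = 0 := by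
      intro m _ hm
      rw [map_smul, GradedAlgebra.proj_apply,
        DirectSum.decompose_of_mem_ne 𝒜 (hbm m) (hinj m hm), smul_zero]
    rw [Finset.sum_eq_single n h4 (fun h => absurd (Finsupp.mem_support_iff.mpr hn) h)] at h3
    rw [map_smul, GradedAlgebra.proj_apply, DirectSum.decompose_of_mem_same 𝒜 (hbm n)] at h3
    exact (smul_eq_zero.mp h3).resolve_left hn
  -- the Higman map
  obtain ⟨I, hI⟩ : ∃ I : A →ₗ[K] A, ∀ a, I a = ∑ p, x p * a * y p := by
    refine ⟨{ toFun := fun a => ∑ p, x p * a * y p, map_add' := ?_, map_smul' := ?_ }, fun a => rfl⟩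
    · intro a b
      simp [mul_add, add_mul, Finset.sum_add_distrib]
    · intro c a
      simp [Finset.smul_sum, mul_smul_comm, smul_mul_assoc]
  -- I kills nonzero degrees
  have hIzero : ∀ (j : ℤ), j ≠ 0 → ∀ b ∈ 𝒜 j, I b = 0 := by
    intro j hj b hb
    by_contra hne
    obtain ⟨c, hc⟩ := hτnd _ hne
    apply hc
    rw [hI, Finset.sum_mul, map_sum]
    have : ∀ p : P, τ (x p * b * y p * c) = τ (x p * (b * (y p * c))) := by
      intro p; simp only [mul_assoc]
    rw [Finset.sum_congr rfl fun p _ => this p]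
    exact htrace b c (hnil j hj b hb)
  -- I factors through degree 0
  have hI0 : ∀ a : A, I a = I (DirectSum.decompose 𝒜 a 0 : A) := by
    intro a
    conv_lhs => rw [← DirectSum.sum_support_decompose 𝒜 a]
    rw [map_sum]
    refine Finset.sum_eq_single 0 ?_ ?_
    · intro i _ hne
      exact hIzero i hne _ (SetLike.coe_mem _)
    · intro h
      rw [DFinsupp.notMem_support_iff.mp h]
      simp
  have hImem : ∀ a : A, I a ∈ 𝒜 (-d) := by
    intro a
    rw [hI0, hI]
    refine Submodule.sum_mem _ fun p _ => ?_
    have hmem := SetLike.mul_mem_graded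
      (SetLike.mul_mem_graded (hx p) (SetLike.coe_mem (DirectSum.decompose 𝒜 a 0))) (hy p)
    have hdeg : e p + 0 + (-d - e p) = -d := by ring
    rw [hdeg] at hmem
    exact hmem
  constructor
  · intro a
    have := hImem a
    rwa [hI] at this
  · have hset : {z : A | ∃ a : A, z = ∑ p : P, x p * a * y p} = Set.range I := by
      ext z
      constructor
      · rintro ⟨a, rfl⟩; exact ⟨a, hI a⟩
      · rintro ⟨a, rfl⟩; exact ⟨a, hI a⟩
    rw [hset, ← LinearMap.coe_range, Submodule.span_eq]
    have hle : LinearMap.range I ≤ LinearMap.range (I ∘ₗ (𝒜 0).subtype) := by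
      rintro z ⟨a, rfl⟩
      exact ⟨DirectSum.decompose 𝒜 a 0, (hI0 a).symm⟩
    exact le_trans (Submodule.finrank_mono hle) (LinearMap.finrank_range_le _)

/-- Theorem 3.4(3): the Higman ideal is contained in `A_{-d}`, and
`dim H(A) ≤ dim A₀` when `d ≠ 0`. -/
theorem stmt4
    {K A : Type} [Field K] [Ring A] [Algebra K A] [FiniteDimensional K A]
    {Λ : Type} [PartialOrder Λ] [Fintype Λ]
    {M : Λ → Type} [∀ l : Λ, Fintype (M l)]
    (C : ∀ l : Λ, M l → M l → A)
    (bas : Module.Basis (Σ l : Λ, M l × M l) K A)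
    (hbas : ∀ (l : Λ) (S T : M l), bas ⟨l, (S, T)⟩ = C l S T)
    (star : A →ₗ[K] A)
    (hstar : ∀ a b : A, star (a * b) = star b * star a)
    (hstarC : ∀ (l : Λ) (S T : M l), star (C l S T) = C l T S)
    (hcell : ∀ (a : A) (l : Λ), ∃ r : M l → M l → K, ∀ S T : M l,
      a * C l S T - ∑ S' : M l, r S' S • C l S' T ∈
        Submodule.span K {x : A | ∃ μ : Λ, μ < l ∧ ∃ U V : M μ, x = C μ U V})
    (τ : A →ₗ[K] K)
    (hτsym : ∀ a b : A, τ (a * b) = τ (b * a))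
    (hτnd : ∀ a : A, a ≠ 0 → ∃ b : A, τ (a * b) ≠ 0)
    (D : ∀ l : Λ, M l → M l → A)
    (hdual : ∀ (l μ : Λ) (S T : M l) (U V : M μ),
      τ (C l S T * D μ U V) =
        if (⟨l, (S, T)⟩ : Σ l : Λ, M l × M l) = ⟨μ, (V, U)⟩ then 1 else 0)
    (𝒜 : ℤ → Submodule K A) [GradedAlgebra 𝒜]
    (deg : ∀ l : Λ, M l → ℤ)
    (hhom : ∀ (l : Λ) (S T : M l), C l S T ∈ 𝒜 (deg l S + deg l T))
    (d : ℤ)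
    (hτhom : ∀ i : ℤ, i ≠ -d → ∀ a ∈ 𝒜 i, τ a = 0)
    (hd : d ≠ 0) :
    (∀ a : A,
      (∑ p : Σ l : Λ, M l × M l, C p.1 p.2.1 p.2.2 * a * D p.1 p.2.2 p.2.1) ∈ 𝒜 (-d)) ∧
    Module.finrank K
        (Submodule.span K
          {z : A | ∃ a : A,
            z = ∑ p : Σ l : Λ, M l × M l, C p.1 p.2.1 p.2.2 * a * D p.1 p.2.2 p.2.1}) ≤
      Module.finrank K (𝒜 0) := by
  classical
  have pair : ∀ p q : (Σ l : Λ, M l × M l),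
      τ (C p.1 p.2.1 p.2.2 * D q.1 q.2.2 q.2.1) = if p = q then 1 else 0 := by
    rintro ⟨l, S, T⟩ ⟨μ, U, V⟩
    exact (hdual l μ S T V U).trans (if_congr Iff.rfl rfl rfl)
  exact aux (fun p => C p.1 p.2.1 p.2.2) (fun p => D p.1 p.2.2 p.2.1) bas
    (fun p => hbas p.1 p.2.1 p.2.2) τ hτsym hτnd (fun p q => by by_cases h : p = q <;> simp [pair, h]) 𝒜
    (fun p => deg p.1 p.2.1 + deg p.1 p.2.2) (fun p => hhom p.1 p.2.1 p.2.2) d hτhom hd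
end

section
/- Let A be a finite dimensional symmetric algebra with symmetrizing trace τ, basis {x_i} and dual basis {y_i}. For any integer c (with respect to a grading on A making τ homogeneous and the basis homogeneous), the set H_c(A) = { Σ_{deg(x_i)=c} x_i a y_i : a ∈ A } is contained in the centralizer Z_A(A_0) of the degree-zero component A_0 in A. Consequently the K-span H_gr(A) of all H_c(A) satisfies H_gr(A) ⊆ Z_A(A_0). -/
open scoped Classical

/-- Proposition 4.1: for each `c ∈ ℤ`, `H_c(A) = {∑_{deg xᵢ = c} xᵢ a yᵢ : a ∈ A}` is
contained in the centralizer of `A₀`; consequently the span `H_gr(A)` of all the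
`H_c(A)` is contained in the centralizer of `A₀`. -/
theorem stmt5 {K A : Type} [Field K] [Ring A] [Algebra K A] [FiniteDimensional K A]
    (𝒜 : ℤ → Submodule K A) [GradedAlgebra 𝒜]
    (τ : A →ₗ[K] K)
    (hτsym : ∀ a b : A, τ (a * b) = τ (b * a))
    (hτnd : ∀ a : A, a ≠ 0 → ∃ b : A, τ (a * b) ≠ 0)
    (d : ℤ)
    (hτhom : ∀ i : ℤ, i ≠ -d → ∀ a ∈ 𝒜 i, τ a = 0)
    {ι : Type} [Fintype ι] (x y : Module.Basis ι K A)
    (degx : ι → ℤ) (hx : ∀ i : ι, x i ∈ 𝒜 (degx i))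
    (hdual : ∀ i j : ι, τ (x i * y j) = if i = j then 1 else 0) :
    (∀ (c : ℤ) (a : A), ∀ b ∈ 𝒜 0,
      (∑ i ∈ Finset.univ.filter (fun i : ι => degx i = c), x i * a * y i) * b =
        b * ∑ i ∈ Finset.univ.filter (fun i : ι => degx i = c), x i * a * y i) ∧
    (∀ z ∈ Submodule.span K
        {z : A | ∃ (c : ℤ) (a : A),
          z = ∑ i ∈ Finset.univ.filter (fun i : ι => degx i = c), x i * a * y i},
      ∀ b ∈ 𝒜 0, z * b = b * z) := by
  -- coordinate formulas
  have coordy : ∀ (j : ι) (z : A), τ (x j * z) = y.repr z j := by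
    intro j z
    have h : (τ ∘ₗ LinearMap.mulLeft K (x j)) = y.coord j := by
      apply y.ext
      intro k
      simp only [LinearMap.comp_apply, LinearMap.mulLeft_apply, hdual,
        Module.Basis.coord_apply, Module.Basis.repr_self, Finsupp.single_apply]
      simp [eq_comm]
    have := DFunLike.congr_fun h z
    simpa [Module.Basis.coord_apply] using this
  have coordx : ∀ (j : ι) (z : A), τ (z * y j) = x.repr z j := by
    intro j z
    have h : (τ ∘ₗ LinearMap.mulRight K (y j)) = x.coord j := by
      apply x.ext
      intro k
      simp only [LinearMap.comp_apply, LinearMap.mulRight_apply, hdual,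
        Module.Basis.coord_apply, Module.Basis.repr_self, Finsupp.single_apply]
    have := DFunLike.congr_fun h z
    simpa [Module.Basis.coord_apply] using this
  -- expansions
  have expandY : ∀ z : A, z = ∑ j, τ (x j * z) • y j := by
    intro z
    conv_lhs => rw [← y.sum_repr z]
    exact Finset.sum_congr rfl fun j _ => by rw [coordy]
  have expandX : ∀ z : A, z = ∑ j, τ (z * y j) • x j := by
    intro z
    conv_lhs => rw [← x.sum_repr z]
    exact Finset.sum_congr rfl fun j _ => by rw [coordx]
  -- vanishing for degree reasons
  have vanish : ∀ (p q : ℤ) (u v : A), u ∈ 𝒜 p → v ∈ 𝒜 q → p + q ≠ -d → τ (u * v) = 0 :=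
    fun p q u v hu hv h => hτhom (p + q) h _ (SetLike.mul_mem_graded hu hv)
  -- coordinates of homogeneous elements vanish off the degree
  have hrepr0 : ∀ (m : ℤ) (b : A), b ∈ 𝒜 m → ∀ i, degx i ≠ m → x.repr b i = 0 := by
    intro m b hb i him
    set π : A →ₗ[K] A := (𝒜 m).subtype ∘ₗ (DirectSum.component K ℤ (fun i => 𝒜 i) m) ∘ₗ
      (DirectSum.decomposeLinearEquiv 𝒜 : A →ₗ[K] DirectSum ℤ (fun i => 𝒜 i)) with hπdef
    have hπ : ∀ z : A, π z = (DirectSum.decompose 𝒜 z m : A) := fun z => rfl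
    have hcomp : (DirectSum.decompose 𝒜 b m : A)
        = ∑ j ∈ Finset.univ.filter (fun j => degx j = m), x.repr b j • x j := by
      rw [← hπ]
      conv_lhs => rw [← x.sum_repr b]
      rw [map_sum, Finset.sum_filter]
      refine Finset.sum_congr rfl fun j _ => ?_
      rw [map_smul, hπ]
      by_cases hj : degx j = m
      · rw [if_pos hj]
        congr 1
        subst hj
        exact DirectSum.decompose_of_mem_same 𝒜 (hx j)
      · rw [if_neg hj, DirectSum.decompose_of_mem_ne 𝒜 (hx j) hj, smul_zero]
    have hb2 : b = ∑ j ∈ Finset.univ.filter (fun j => degx j = m), x.repr b j • x j := by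
      rw [← hcomp, DirectSum.decompose_of_mem_same 𝒜 hb]
    have := congrArg (fun z => x.repr z i) hb2
    simp only [map_sum, map_smul, Module.Basis.repr_self, Finsupp.coe_finset_sum, Finset.sum_apply,
      Finsupp.smul_apply, Finsupp.single_apply, smul_eq_mul] at this
    rw [this]
    refine Finset.sum_eq_zero fun j hj => ?_
    rw [Finset.mem_filter] at hj
    rw [if_neg, mul_zero]
    intro hji; exact him (hji ▸ hj.2)
  have hτy0 : ∀ (m : ℤ) (b : A), b ∈ 𝒜 m → ∀ i, degx i ≠ m → τ (b * y i) = 0 := by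
    intro m b hb i him
    rw [coordx]
    exact hrepr0 m b hb i him
  -- pairing with a homogeneous element only sees one component
  have hpick : ∀ (p : ℤ) (u w : A), u ∈ 𝒜 p →
      τ (u * w) = τ (u * (DirectSum.decompose 𝒜 w (-d - p) : A)) := by
    intro p u w hu
    conv_lhs => rw [← DirectSum.sum_support_decompose 𝒜 w]
    rw [Finset.mul_sum, map_sum]
    refine Finset.sum_eq_single (-d - p) ?_ ?_
    · intro k _ hkne
      exact vanish p k u _ hu (SetLike.coe_mem _) (by omega)
    · intro hk
      rw [DFinsupp.notMem_support_iff] at hk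
      rw [hk]
      simp
  -- dual basis elements are homogeneous
  have hy : ∀ i, y i ∈ 𝒜 (-d - degx i) := by
    intro i
    have hz : ∀ k, k ≠ -d - degx i → (DirectSum.decompose 𝒜 (y i) k : A) = 0 := by
      intro k hk
      by_contra h0
      obtain ⟨b, hb⟩ := hτnd _ h0
      apply hb
      have hzmem : (DirectSum.decompose 𝒜 (y i) k : A) ∈ 𝒜 k := SetLike.coe_mem _
      rw [hpick k _ b hzmem, hτsym]
      have hb'mem : (DirectSum.decompose 𝒜 b (-d - k) : A) ∈ 𝒜 (-d - k) := SetLike.coe_mem _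
      have h2 := hpick (-d - k) _ (y i) hb'mem
      have he : -d - (-d - k) = k := by ring
      rw [he] at h2
      rw [← h2]
      exact hτy0 (-d - k) _ hb'mem i (by omega)
    have hs := DirectSum.sum_support_decompose 𝒜 (y i)
    rw [← hs]
    refine Submodule.sum_mem _ fun k _ => ?_
    by_cases hk : k = -d - degx i
    · subst hk; exact SetLike.coe_mem _
    · rw [hz k hk]; exact (𝒜 _).zero_mem
  -- main computation
  have main : ∀ (c : ℤ) (a : A), ∀ b ∈ 𝒜 0,
      (∑ i ∈ Finset.univ.filter (fun i : ι => degx i = c), x i * a * y i) * b =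
        b * ∑ i ∈ Finset.univ.filter (fun i : ι => degx i = c), x i * a * y i := by
    intro c a b hb
    have hlhs : (∑ i ∈ Finset.univ.filter (fun i : ι => degx i = c), x i * a * y i) * b
        = ∑ i : ι, ∑ j : ι,
            (if degx i = c then τ (x j * (y i * b)) else 0) • (x i * a * y j) := by
      rw [Finset.sum_mul, Finset.sum_filter]
      refine Finset.sum_congr rfl fun i _ => ?_
      by_cases hi : degx i = c
      · simp only [if_pos hi]
        rw [mul_assoc (x i * a) (y i) b]
        conv_lhs => rw [expandY (y i * b)]
        rw [Finset.mul_sum]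
        exact Finset.sum_congr rfl fun j _ => by rw [mul_smul_comm]
      · simp only [if_neg hi, zero_smul, Finset.sum_const_zero]
    have hrhs : b * (∑ i ∈ Finset.univ.filter (fun i : ι => degx i = c), x i * a * y i)
        = ∑ i : ι, ∑ j : ι,
            (if degx j = c then τ (b * x j * y i) else 0) • (x i * a * y j) := by
      rw [Finset.mul_sum, Finset.sum_filter]
      rw [Finset.sum_comm]
      refine Finset.sum_congr rfl fun j _ => ?_
      by_cases hj : degx j = c
      · simp only [if_pos hj]
        have h3 : b * (x j * a * y j) = b * x j * a * y j := by
          simp only [mul_assoc]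
        rw [h3]
        conv_lhs => rw [expandX (b * x j)]
        rw [Finset.sum_mul, Finset.sum_mul]
        exact Finset.sum_congr rfl fun i _ => by rw [smul_mul_assoc, smul_mul_assoc]
      · simp only [if_neg hj, zero_smul, Finset.sum_const_zero]
    rw [hlhs, hrhs]
    refine Finset.sum_congr rfl fun i _ => Finset.sum_congr rfl fun j _ => ?_
    have hfg : τ (x j * (y i * b)) = τ (b * x j * y i) := by
      rw [← mul_assoc, hτsym (x j * y i) b, ← mul_assoc]
    have hzero : degx i ≠ degx j → τ (b * x j * y i) = 0 := by
      intro hne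
      have h1 : b * x j ∈ 𝒜 (0 + degx j) := SetLike.mul_mem_graded hb (hx j)
      exact vanish _ _ _ _ h1 (hy i) (by omega)
    by_cases h1 : degx i = c <;> by_cases h2 : degx j = c
    · rw [if_pos h1, if_pos h2, hfg]
    · rw [if_pos h1, if_neg h2, hfg, hzero (by omega)]
    · rw [if_neg h1, if_pos h2, hzero (by omega)]
    · rw [if_neg h1, if_neg h2]
  refine ⟨main, ?_⟩
  intro z hz
  induction hz using Submodule.span_induction with
  | mem w hw =>
    obtain ⟨c, a, rfl⟩ := hw
    exact main c a
  | zero => intro b _; simp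
  | add u v hu hv ihu ihv =>
    intro b hb
    rw [add_mul, mul_add, ihu b hb, ihv b hb]
  | smul r u hu ihu =>
    intro b hb
    rw [smul_mul_assoc, mul_smul_comm, ihu b hb]
end

section
/- Let A be a symmetric cellular algebra with cellular basis {C^λ_{S,T}} and dual basis {D^λ_{S,T}} determined by a symmetrizing trace τ. Then for all λ ∈ Λ and S, T, P, Q ∈ M(λ): (i) C^λ_{S,T} D^λ_{T,Q} = C^λ_{S,P} D^λ_{P,Q}; (ii) C^λ_{S,T} D^λ_{P,Q} = 0 whenever T ≠ P; (iii) D^λ_{P,Q} C^λ_{S,T} = 0 whenever Q ≠ S. -/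
open scoped Classical

/-- Lemma 2.4 (3),(5),(6) for symmetric cellular algebras. -/
theorem stmt6
    {K A : Type} [Field K] [Ring A] [Algebra K A] [FiniteDimensional K A]
    {Λ : Type} [PartialOrder Λ] [Fintype Λ]
    {M : Λ → Type} [∀ l : Λ, Fintype (M l)]
    (C : ∀ l : Λ, M l → M l → A)
    (bas : Module.Basis (Σ l : Λ, M l × M l) K A)
    (hbas : ∀ (l : Λ) (S T : M l), bas ⟨l, (S, T)⟩ = C l S T)
    (star : A →ₗ[K] A)
    (hstar : ∀ a b : A, star (a * b) = star b * star a)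
    (hstarC : ∀ (l : Λ) (S T : M l), star (C l S T) = C l T S)
    (hcell : ∀ (a : A) (l : Λ), ∃ r : M l → M l → K, ∀ S T : M l,
      a * C l S T - ∑ S' : M l, r S' S • C l S' T ∈
        Submodule.span K {x : A | ∃ μ : Λ, μ < l ∧ ∃ U V : M μ, x = C μ U V})
    (τ : A →ₗ[K] K)
    (hτsym : ∀ a b : A, τ (a * b) = τ (b * a))
    (hτnd : ∀ a : A, a ≠ 0 → ∃ b : A, τ (a * b) ≠ 0)
    (D : ∀ l : Λ, M l → M l → A)
    (hdual : ∀ (l μ : Λ) (S T : M l) (U V : M μ),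
      τ (C l S T * D μ U V) =
        if (⟨l, (S, T)⟩ : Σ l : Λ, M l × M l) = ⟨μ, (V, U)⟩ then 1 else 0)
    :
    (∀ (l : Λ) (S T P Q : M l), C l S T * D l T Q = C l S P * D l P Q) ∧
    (∀ (l : Λ) (S T P Q : M l), T ≠ P → C l S T * D l P Q = 0) ∧
    (∀ (l : Λ) (S T P Q : M l), Q ≠ S → D l P Q * C l S T = 0) := by
  classical
  -- Fact B: if τ (C μ U V * x) = 0 for all μ,U,V then x = 0
  have factB : ∀ x : A, (∀ (μ : Λ) (U V : M μ), τ (C μ U V * x) = 0) → x = 0 := by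
    intro x hx
    by_contra hne
    obtain ⟨b, hb⟩ := hτnd x hne
    apply hb
    rw [hτsym]
    have hbe : b = ∑ i, bas.repr b i • bas i := (bas.sum_repr b).symm
    rw [hbe, Finset.sum_mul, map_sum]
    apply Finset.sum_eq_zero
    rintro ⟨l, S, T⟩ _
    rw [smul_mul_assoc, map_smul, hbas, hx, smul_zero]
  -- lower span kills D l P Q under τ
  have hlow : ∀ (l : Λ) (P Q : M l) (w : A),
      w ∈ Submodule.span K {x : A | ∃ μ : Λ, μ < l ∧ ∃ U V : M μ, x = C μ U V} →
      τ (w * D l P Q) = 0 := by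
    intro l P Q w hw
    induction hw using Submodule.span_induction with
    | mem x hx =>
        obtain ⟨μ, hμ, U, V, rfl⟩ := hx
        rw [hdual, if_neg]
        intro h
        exact (ne_of_lt hμ) (congrArg Sigma.fst h)
    | zero => simp
    | add x y _ _ hx hy => rw [add_mul, map_add, hx, hy, add_zero]
    | smul c x _ hx => rw [smul_mul_assoc, map_smul, hx, smul_zero]
  -- star is an involution
  have hstar2 : ∀ a : A, star (star a) = a := by
    have h : star.comp star = LinearMap.id := by
      apply bas.ext
      rintro ⟨l, S, T⟩
      simp [hbas, hstarC]
    intro a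
    exact congrArg (fun f => f a) (congrArg DFunLike.coe h)
  -- star preserves the lower span
  have hstarlow : ∀ (l : Λ) (w : A),
      w ∈ Submodule.span K {x : A | ∃ μ : Λ, μ < l ∧ ∃ U V : M μ, x = C μ U V} →
      star w ∈ Submodule.span K {x : A | ∃ μ : Λ, μ < l ∧ ∃ U V : M μ, x = C μ U V} := by
    intro l w hw
    induction hw using Submodule.span_induction with
    | mem x hx =>
        obtain ⟨μ, hμ, U, V, rfl⟩ := hx
        rw [hstarC]
        exact Submodule.subset_span ⟨μ, hμ, V, U, rfl⟩
    | zero => simp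
    | add x y _ _ hx hy => rw [map_add]; exact Submodule.add_mem _ hx hy
    | smul c x _ hx => rw [map_smul]; exact Submodule.smul_mem _ _ hx
  -- key computation for (i) and (ii)
  have key1 : ∀ (μ : Λ) (U V : M μ) (l : Λ) (S T P Q : M l),
      τ (C μ U V * (C l S T * D l P Q)) =
        if T = P then Classical.choose (hcell (C μ U V) l) Q S else 0 := by
    intro μ U V l S T P Q
    set r := Classical.choose (hcell (C μ U V) l) with hrdef
    have hr := Classical.choose_spec (hcell (C μ U V) l)
    rw [← hrdef] at hr
    have hm := hr S T
    have hsplit : C μ U V * C l S T =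
        (∑ S' : M l, r S' S • C l S' T) +
          (C μ U V * C l S T - ∑ S' : M l, r S' S • C l S' T) := by abel
    rw [← mul_assoc, hsplit, add_mul, map_add, hlow l P Q _ hm, add_zero,
        Finset.sum_mul, map_sum]
    simp only [smul_mul_assoc, map_smul, hdual, smul_eq_mul, Sigma.mk.inj_iff,
      heq_eq_eq, Prod.mk.injEq, true_and]
    by_cases hTP : T = P
    · subst hTP
      simp [Finset.sum_ite_eq']
    · simp [hTP]
  -- key computation for (iii)
  have key2 : ∀ (μ : Λ) (U V : M μ) (l : Λ) (S T P Q : M l), Q ≠ S →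
      τ (C μ U V * (D l P Q * C l S T)) = 0 := by
    intro μ U V l S T P Q hQS
    rw [← mul_assoc, hτsym, ← mul_assoc]
    -- now : τ ((C l S T * C μ U V) * D l P Q) = 0
    set r := Classical.choose (hcell (C μ V U) l) with hrdef
    have hr := Classical.choose_spec (hcell (C μ V U) l)
    rw [← hrdef] at hr
    have hm := hr T S
    have hCC : C l S T * C μ U V =
        (∑ T' : M l, r T' T • C l S T') +
          star (C μ V U * C l T S - ∑ T' : M l, r T' T • C l T' S) := by
      rw [map_sub, hstar, hstarC, hstarC, map_sum]
      simp only [map_smul, hstarC]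
      abel
    rw [hCC, add_mul, map_add, hlow l P Q _ (hstarlow l _ hm), add_zero,
        Finset.sum_mul, map_sum]
    simp only [smul_mul_assoc, map_smul, hdual, smul_eq_mul, Sigma.mk.inj_iff,
      heq_eq_eq, Prod.mk.injEq, true_and]
    simp [Ne.symm hQS]
  refine ⟨?_, ?_, ?_⟩
  · intro l S T P Q
    have h : C l S T * D l T Q - C l S P * D l P Q = 0 := by
      apply factB
      intro μ U V
      rw [mul_sub, map_sub, key1, key1, if_pos rfl, if_pos rfl, sub_self]
    exact sub_eq_zero.mp h
  · intro l S T P Q hTP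
    apply factB
    intro μ U V
    rw [key1, if_neg hTP]
  · intro l S T P Q hQS
    apply factB
    intro μ U V
    exact key2 μ U V l S T P Q hQS
end

section
/- Let A be a symmetric cellular algebra. Then (C^λ_{S,S} D^λ_{S,S})² = k_λ · C^λ_{S,S} D^λ_{S,S} for every λ ∈ Λ and S ∈ M(λ), where k_λ is the scalar satisfying G(λ)G'(λ) = k_λ E. -/
open scoped Classical

/-- Lemma 2.6: `(C^λ_{S,S} D^λ_{S,S})² = k_λ • C^λ_{S,S} D^λ_{S,S}`. -/
theorem stmt7
    {K A : Type} [Field K] [Ring A] [Algebra K A] [FiniteDimensional K A]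
    {Λ : Type} [PartialOrder Λ] [Fintype Λ]
    {M : Λ → Type} [∀ l : Λ, Fintype (M l)]
    (C : ∀ l : Λ, M l → M l → A)
    (bas : Module.Basis (Σ l : Λ, M l × M l) K A)
    (hbas : ∀ (l : Λ) (S T : M l), bas ⟨l, (S, T)⟩ = C l S T)
    (star : A →ₗ[K] A)
    (hstar : ∀ a b : A, star (a * b) = star b * star a)
    (hstarC : ∀ (l : Λ) (S T : M l), star (C l S T) = C l T S)
    (hcell : ∀ (a : A) (l : Λ), ∃ r : M l → M l → K, ∀ S T : M l,
      a * C l S T - ∑ S' : M l, r S' S • C l S' T ∈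
        Submodule.span K {x : A | ∃ μ : Λ, μ < l ∧ ∃ U V : M μ, x = C μ U V})
    (τ : A →ₗ[K] K)
    (hτsym : ∀ a b : A, τ (a * b) = τ (b * a))
    (hτnd : ∀ a : A, a ≠ 0 → ∃ b : A, τ (a * b) ≠ 0)
    (D : ∀ l : Λ, M l → M l → A)
    (hdual : ∀ (l μ : Λ) (S T : M l) (U V : M μ),
      τ (C l S T * D μ U V) =
        if (⟨l, (S, T)⟩ : Σ l : Λ, M l × M l) = ⟨μ, (V, U)⟩ then 1 else 0)
    (Φ Φ' : ∀ l : Λ, M l → M l → K)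
    (hΦ : ∀ (l : Λ) (S T U V : M l),
      C l S T * C l U V - Φ l T U • C l S V ∈
        Submodule.span K {x : A | ∃ μ : Λ, μ < l ∧ ∃ U' V' : M μ, x = C μ U' V'})
    (hΦ' : ∀ (l : Λ) (S T U V : M l),
      D l S T * D l U V - Φ' l T U • D l S V ∈
        Submodule.span K {x : A | ∃ μ : Λ, l < μ ∧ ∃ U' V' : M μ, x = D μ U' V'})
    (k : Λ → K)
    (hk : ∀ l : Λ, (Matrix.of (Φ l)) * (Matrix.of (Φ' l)) = k l • (1 : Matrix (M l) (M l) K))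
    :
    ∀ (l : Λ) (S : M l),
      (C l S S * D l S S) ^ 2 = k l • (C l S S * D l S S) := by
  intro l S
  -- Nondegeneracy: if τ (C ν P Q * c) = 0 for all basis elements, then c = 0.
  have L0 : ∀ c : A, (∀ (ν : Λ) (P Q : M ν), τ (C ν P Q * c) = 0) → c = 0 := by
    intro c hc
    by_contra h
    obtain ⟨b, hb⟩ := hτnd c h
    apply hb
    rw [hτsym]
    conv_lhs => rw [← bas.sum_repr b]
    rw [Finset.sum_mul, map_sum]
    refine Finset.sum_eq_zero fun i _ => ?_
    obtain ⟨ν, P, Q⟩ := i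
    rw [hbas, smul_mul_assoc, map_smul, hc, smul_zero]
  -- Lower cell ideal pairs to zero with D l _ _.
  have L2 : ∀ (μ0 : Λ), μ0 ≤ l → ∀ (P Q : M l) (x : A),
      x ∈ Submodule.span K {x : A | ∃ ν : Λ, ν < μ0 ∧ ∃ U V : M ν, x = C ν U V} →
      τ (x * D l P Q) = 0 := by
    intro μ0 hμ0 P Q x hx
    have hle : Submodule.span K {x : A | ∃ ν : Λ, ν < μ0 ∧ ∃ U V : M ν, x = C ν U V} ≤
        LinearMap.ker (τ.comp (LinearMap.mulRight K (D l P Q))) := by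
      rw [Submodule.span_le]
      rintro _ ⟨ν, hν, U, V, rfl⟩
      simp only [SetLike.mem_coe, LinearMap.mem_ker, LinearMap.coe_comp,
        Function.comp_apply, LinearMap.mulRight_apply]
      rw [hdual, if_neg]
      intro hcon
      exact absurd (congrArg Sigma.fst hcon) (ne_of_lt (lt_of_lt_of_le hν hμ0))
    simpa using hle hx
  -- Higher dual span pairs to zero with C l S S.
  have L2' : ∀ (x : A),
      x ∈ Submodule.span K {x : A | ∃ μ : Λ, l < μ ∧ ∃ U V : M μ, x = D μ U V} →
      τ (C l S S * x) = 0 := by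
    intro x hx
    have hle : Submodule.span K {x : A | ∃ μ : Λ, l < μ ∧ ∃ U V : M μ, x = D μ U V} ≤
        LinearMap.ker (τ.comp (LinearMap.mulLeft K (C l S S))) := by
      rw [Submodule.span_le]
      rintro _ ⟨μ, hμ, U, V, rfl⟩
      simp only [SetLike.mem_coe, LinearMap.mem_ker, LinearMap.coe_comp,
        Function.comp_apply, LinearMap.mulLeft_apply]
      rw [hdual, if_neg]
      intro hcon
      exact absurd (congrArg Sigma.fst hcon) (ne_of_lt hμ)
    simpa using hle hx
  -- Lower cell basis elements annihilate D l _ _.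
  have L1 : ∀ (μ : Λ), μ < l → ∀ (U V : M μ) (P Q : M l), C μ U V * D l P Q = 0 := by
    intro μ hμ U V P Q
    apply L0
    intro ν P' Q'
    rw [← mul_assoc]
    obtain ⟨r, hrr⟩ := hcell (C ν P' Q') μ
    have hmem := hrr U V
    have hτ1 : τ ((C ν P' Q' * C μ U V - ∑ U' : M μ, r U' U • C μ U' V) * D l P Q) = 0 :=
      L2 μ (le_of_lt hμ) P Q _ hmem
    have hτ2 : τ ((∑ U' : M μ, r U' U • C μ U' V) * D l P Q) = 0 := by
      rw [Finset.sum_mul, map_sum]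
      refine Finset.sum_eq_zero fun U' _ => ?_
      rw [smul_mul_assoc, map_smul, hdual, if_neg, smul_zero]
      intro hcon
      exact absurd (congrArg Sigma.fst hcon) (ne_of_lt hμ)
    have hsplit : τ (C ν P' Q' * C μ U V * D l P Q)
        = τ ((C ν P' Q' * C μ U V - ∑ U' : M μ, r U' U • C μ U' V) * D l P Q)
          + τ ((∑ U' : M μ, r U' U • C μ U' V) * D l P Q) := by
      rw [← map_add, ← add_mul, sub_add_cancel]
    rw [hsplit, hτ1, hτ2, add_zero]
  -- Lower cell span annihilates D l _ _.
  have L3 : ∀ (P Q : M l) (x : A),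
      x ∈ Submodule.span K {x : A | ∃ μ : Λ, μ < l ∧ ∃ U V : M μ, x = C μ U V} →
      x * D l P Q = 0 := by
    intro P Q x hx
    have hle : Submodule.span K {x : A | ∃ μ : Λ, μ < l ∧ ∃ U V : M μ, x = C μ U V} ≤
        LinearMap.ker (LinearMap.mulRight K (D l P Q)) := by
      rw [Submodule.span_le]
      rintro _ ⟨μ, hμ, U, V, rfl⟩
      simp only [SetLike.mem_coe, LinearMap.mem_ker, LinearMap.mulRight_apply]
      exact L1 μ hμ U V P Q
    simpa using hle hx
  -- Expand D l S S * C l S S.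
  obtain ⟨r, hr⟩ := hcell (D l S S) l
  set w := D l S S * C l S S - ∑ S' : M l, r S' S • C l S' S with hwdef
  have hw : w ∈ Submodule.span K {x : A | ∃ μ : Λ, μ < l ∧ ∃ U V : M μ, x = C μ U V} :=
    hr S S
  have hDC : D l S S * C l S S = (∑ S' : M l, r S' S • C l S' S) + w := by
    rw [hwdef]; abel
  -- Identify the coefficients: r S' S = Φ' l S' S.
  have hre : ∀ S' : M l, r S' S = Φ' l S' S := by
    intro S'
    have h1 : τ (D l S S * C l S S * D l S S') = r S' S := by
      rw [hDC, add_mul, map_add, L2 l le_rfl S S' w hw, add_zero,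
        Finset.sum_mul, map_sum]
      have heach : ∀ S'' : M l,
          τ ((r S'' S • C l S'' S) * D l S S') = if S'' = S' then r S'' S else 0 := by
        intro S''
        rw [smul_mul_assoc, map_smul, hdual]
        by_cases h : S'' = S'
        · subst h; rw [if_pos rfl, if_pos rfl, smul_eq_mul, mul_one]
        · rw [if_neg, if_neg h, smul_zero]
          intro hcon
          exact h (by simpa using hcon)
      simp only [heach]
      simp
    have h2 : τ (D l S S * C l S S * D l S S') = Φ' l S' S := by
      have hass : τ (D l S S * C l S S * D l S S') = τ (C l S S * (D l S S' * D l S S)) := by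
        rw [mul_assoc, hτsym, mul_assoc]
      rw [hass]
      have hz := L2' _ (hΦ' l S S' S S)
      have hsplit : τ (C l S S * (D l S S' * D l S S))
          = τ (C l S S * (D l S S' * D l S S - Φ' l S' S • D l S S))
            + Φ' l S' S * τ (C l S S * D l S S) := by
        have hx : C l S S * (D l S S' * D l S S)
            = C l S S * (D l S S' * D l S S - Φ' l S' S • D l S S)
              + C l S S * (Φ' l S' S • D l S S) := by
          rw [← mul_add, sub_add_cancel]
        rw [hx, map_add, mul_smul_comm, map_smul, smul_eq_mul]
      rw [hsplit, hz, zero_add, hdual, if_pos rfl, mul_one]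
    rw [← h1, h2]
  -- The Gram matrix identity at the (S,S) entry.
  have hkS : ∑ S' : M l, Φ l S S' * Φ' l S' S = k l := by
    have := congrFun (congrFun (hk l) S) S
    simpa [Matrix.mul_apply, Matrix.one_apply] using this
  -- Main computation.
  have hx2 : (C l S S * D l S S) ^ 2 = C l S S * (D l S S * C l S S) * D l S S := by
    rw [sq, mul_assoc, mul_assoc, mul_assoc]
  rw [hx2, hDC, mul_add, add_mul, mul_assoc (C l S S) w, L3 S S w hw, mul_zero, add_zero,
    Finset.mul_sum, Finset.sum_mul]
  have heach : ∀ S' : M l,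
      C l S S * (r S' S • C l S' S) * D l S S
        = (Φ l S S' * Φ' l S' S) • (C l S S * D l S S) := by
    intro S'
    have hmem := hΦ l S S S' S
    have hzero : (C l S S * C l S' S - Φ l S S' • C l S S) * D l S S = 0 :=
      L3 S S _ hmem
    have hCC : C l S S * C l S' S * D l S S = Φ l S S' • (C l S S * D l S S) := by
      have hdecomp : C l S S * C l S' S
          = (C l S S * C l S' S - Φ l S S' • C l S S) + Φ l S S' • C l S S := by
        abel
      rw [hdecomp, add_mul, hzero, zero_add, smul_mul_assoc]
    rw [mul_smul_comm, smul_mul_assoc, hCC, smul_smul, hre, mul_comm]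
  simp only [heach]
  rw [← Finset.sum_smul, hkS]
end

section
/- Let A be a graded symmetric cellular algebra with homogeneous symmetrizing trace of degree d. For λ ∈ Λ and c ∈ ℤ set e_{λ,c} = Σ_{S∈M(λ), deg(S)=c} C^λ_{S,S} D^λ_{S,S}. Then e_{λ,c} · e_{μ,c'} = δ_{λμ} δ_{cc'} k_λ e_{λ,c} for all λ, μ ∈ Λ and c, c' ∈ ℤ. -/
open scoped Classical
set_option linter.unusedSectionVars false

section aux
variable {K A : Type} [Field K] [Ring A] [Algebra K A]
variable {Λ : Type} [PartialOrder Λ] [Fintype Λ]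
variable {M : Λ → Type} [∀ l : Λ, Fintype (M l)]
variable (C : ∀ l : Λ, M l → M l → A) (D : ∀ l : Λ, M l → M l → A) (τ : A →ₗ[K] K)

/-- equality of sigma pairs within the same cell -/
lemma aux_sig_eq {l : Λ} (S T V U : M l) :
    ((⟨l, (S, T)⟩ : Σ l : Λ, M l × M l) = ⟨l, (V, U)⟩) ↔ (S = V ∧ T = U) := by
  simp [Sigma.mk.inj_iff]

variable (hdual : ∀ (l μ : Λ) (S T : M l) (U V : M μ),
      τ (C l S T * D μ U V) =
        if (⟨l, (S, T)⟩ : Σ l : Λ, M l × M l) = ⟨μ, (V, U)⟩ then 1 else 0)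

include hdual in
lemma aux_dual_same {l : Λ} (S T U V : M l) :
    τ (C l S T * D l U V) = if S = V ∧ T = U then 1 else 0 := by
  rw [hdual]; simp [aux_sig_eq]

include hdual in
lemma aux_dual_ne {l m : Λ} (h : l ≠ m) (S T : M l) (U V : M m) :
    τ (C l S T * D m U V) = 0 := by
  rw [hdual, if_neg]
  intro hh; exact h (congrArg Sigma.fst hh)

include hdual in
/-- τ kills (lower-span * D) when ¬ m < l -/
lemma aux_low_tau {l m : Λ} (h : ¬ m < l) {w : A}
    (hw : w ∈ Submodule.span K {x : A | ∃ μ : Λ, μ < l ∧ ∃ U V : M μ, x = C μ U V})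
    (U V : M m) : τ (w * D m U V) = 0 := by
  induction hw using Submodule.span_induction with
  | mem x hx =>
      obtain ⟨ρ, hρ, X, Y, rfl⟩ := hx
      refine aux_dual_ne C D τ hdual ?_ X Y U V
      rintro rfl; exact h hρ
  | zero => simp
  | add x y hx hy ihx ihy => rw [add_mul, map_add, ihx, ihy, add_zero]
  | smul a x hx ih => rw [smul_mul_assoc, map_smul, ih, smul_zero]

variable (bas : Module.Basis (Σ l : Λ, M l × M l) K A)
  (hbas : ∀ (l : Λ) (S T : M l), bas ⟨l, (S, T)⟩ = C l S T)
  (hτsym : ∀ a b : A, τ (a * b) = τ (b * a))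
  (hτnd : ∀ a : A, a ≠ 0 → ∃ b : A, τ (a * b) ≠ 0)

include hbas hτsym hτnd in
/-- zero test: an element vanishing against all basis elements is zero -/
lemma aux_zero_test {z : A} (hz : ∀ (ν : Λ) (P Q : M ν), τ (C ν P Q * z) = 0) :
    z = 0 := by
  by_contra h0
  obtain ⟨b, hb⟩ := hτnd z h0
  apply hb
  rw [hτsym]
  conv_lhs => rw [← Module.Basis.sum_repr bas b]
  rw [Finset.sum_mul, map_sum]
  apply Finset.sum_eq_zero
  rintro ⟨ν, P, Q⟩ -
  rw [smul_mul_assoc, map_smul, hbas, hz ν P Q, smul_zero]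

variable (hcell : ∀ (a : A) (l : Λ), ∃ r : M l → M l → K, ∀ S T : M l,
      a * C l S T - ∑ S' : M l, r S' S • C l S' T ∈
        Submodule.span K {x : A | ∃ μ : Λ, μ < l ∧ ∃ U V : M μ, x = C μ U V})

include hcell hdual in
/-- mixed-index triple trace vanishing -/
lemma aux_T0 (a : A) {ν m : Λ} (hne : ν ≠ m) (hnm : ¬ m < ν) (P Q : M ν) (U V : M m) :
    τ (a * (C ν P Q * D m U V)) = 0 := by
  obtain ⟨r, hr⟩ := hcell a ν
  have hw := hr P Q
  set w := a * C ν P Q - ∑ S' : M ν, r S' P • C ν S' Q with hwdef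
  have hsplit : a * (C ν P Q * D m U V)
      = (∑ S' : M ν, r S' P • C ν S' Q) * D m U V + w * D m U V := by
    rw [add_comm, hwdef, ← add_mul, sub_add_cancel, mul_assoc]
  rw [hsplit, map_add, aux_low_tau C D τ hdual hnm hw U V, add_zero,
    Finset.sum_mul, map_sum]
  apply Finset.sum_eq_zero
  intro S' _
  rw [smul_mul_assoc, map_smul, aux_dual_ne C D τ hdual hne, smul_zero]

include hcell hdual in
/-- same-index triple trace: value `if T = U then r V S else 0` -/
lemma aux_Tr (a : A) (l : Λ) : ∃ r : M l → M l → K, ∀ S T U V : M l,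
    τ (a * (C l S T * D l U V)) = if T = U then r V S else 0 := by
  obtain ⟨r, hr⟩ := hcell a l
  refine ⟨r, fun S T U V => ?_⟩
  have hw := hr S T
  set w := a * C l S T - ∑ S' : M l, r S' S • C l S' T with hwdef
  have hsplit : a * (C l S T * D l U V)
      = (∑ S' : M l, r S' S • C l S' T) * D l U V + w * D l U V := by
    rw [add_comm, hwdef, ← add_mul, sub_add_cancel, mul_assoc]
  rw [hsplit, map_add, aux_low_tau C D τ hdual (lt_irrefl l) hw U V, add_zero,
    Finset.sum_mul, map_sum]
  have : ∀ S' : M l, τ (r S' S • C l S' T * D l U V)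
      = if S' = V then (if T = U then r V S else 0) else 0 := by
    intro S'
    rw [smul_mul_assoc, map_smul, aux_dual_same C D τ hdual, smul_eq_mul]
    by_cases h1 : S' = V <;> by_cases h2 : T = U <;> simp [h1, h2]
  rw [Finset.sum_congr rfl (fun S' _ => this S'), Finset.sum_ite_eq']
  simp

include hdual hcell hbas hτsym hτnd in
/-- vanishing of `C * D` products across incomparable-or-higher cells -/
lemma aux_CD0 {l m : Λ} (hne : l ≠ m) (hnm : ¬ m < l) (S T : M l) (U V : M m) :
    C l S T * D m U V = 0 := by
  apply aux_zero_test (C := C) (τ := τ) (bas := bas) (hbas := hbas)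
    (hτsym := hτsym) (hτnd := hτnd)
  intro ν P Q
  exact aux_T0 C D τ hdual hcell (C ν P Q) hne hnm S T U V

include hdual hcell hbas hτsym hτnd in
/-- left multiplication by `C` kills the span of higher dual elements -/
lemma aux_Cup0 {l : Λ} {v : A}
    (hv : v ∈ Submodule.span K {x : A | ∃ μ : Λ, l < μ ∧ ∃ U' V' : M μ, x = D μ U' V'})
    {ρ : Λ} (h : ¬ l < ρ) (X Y : M ρ) : C ρ X Y * v = 0 := by
  induction hv using Submodule.span_induction with
  | mem x hx =>
      obtain ⟨ν, hν, U', V', rfl⟩ := hx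
      refine aux_CD0 C D τ hdual bas hbas hτsym hτnd hcell ?_ ?_ X Y U' V'
      · rintro rfl; exact h hν
      · intro hh; exact h (hν.trans hh)
  | zero => rw [mul_zero]
  | add x y hx hy ihx ihy => rw [mul_add, ihx, ihy, add_zero]
  | smul a x hx ih => rw [mul_smul_comm, ih, smul_zero]

/-- swapped sigma-index equality -/
lemma aux_swap_eq {ν : Λ} (P Q : M ν) (i : Σ l : Λ, M l × M l) :
    ((⟨ν, (P, Q)⟩ : Σ l : Λ, M l × M l) = ⟨i.1, (i.2.2, i.2.1)⟩) ↔ i = ⟨ν, (Q, P)⟩ := by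
  obtain ⟨ν', P', Q'⟩ := i
  constructor
  · intro h
    obtain ⟨h1, h2⟩ := Sigma.mk.inj_iff.mp h
    subst h1
    rw [heq_iff_eq, Prod.mk.injEq] at h2
    obtain ⟨rfl, rfl⟩ := h2; rfl
  · intro h
    obtain ⟨h1, h2⟩ := Sigma.mk.inj_iff.mp h
    subst h1
    rw [heq_iff_eq, Prod.mk.injEq] at h2
    obtain ⟨rfl, rfl⟩ := h2; rfl

include hdual hbas hτsym hτnd in
/-- expansion of any element in the dual basis -/
lemma aux_exp (a : A) :
    a = ∑ i : (Σ l : Λ, M l × M l), τ (C i.1 i.2.2 i.2.1 * a) • D i.1 i.2.1 i.2.2 := by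
  set g : A := ∑ i : (Σ l : Λ, M l × M l), τ (C i.1 i.2.2 i.2.1 * a) • D i.1 i.2.1 i.2.2
    with hg
  have key : ∀ (ν : Λ) (P Q : M ν), τ (C ν P Q * (g - a)) = 0 := by
    intro ν P Q
    rw [mul_sub, map_sub, sub_eq_zero, hg, Finset.mul_sum, map_sum]
    have hterm : ∀ i : (Σ l : Λ, M l × M l),
        τ (C ν P Q * (τ (C i.1 i.2.2 i.2.1 * a) • D i.1 i.2.1 i.2.2))
          = if i = ⟨ν, (Q, P)⟩ then τ (C i.1 i.2.2 i.2.1 * a) else 0 := by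
      intro i
      rw [mul_smul_comm, map_smul, smul_eq_mul, hdual, mul_ite, mul_one, mul_zero]
      by_cases h : i = ⟨ν, (Q, P)⟩
      · rw [if_pos ((aux_swap_eq (M := M) P Q i).mpr h), if_pos h]
      · rw [if_neg (fun hh => h ((aux_swap_eq (M := M) P Q i).mp hh)), if_neg h]
    rw [Finset.sum_congr rfl (fun i _ => hterm i), Finset.sum_ite_eq']
    simp
  have h0 := aux_zero_test (C := C) (τ := τ) (bas := bas) (hbas := hbas)
    (hτsym := hτsym) (hτnd := hτnd) (fun ν P Q => key ν P Q)
  rw [sub_eq_zero] at h0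
  exact h0.symm

include hdual hbas hτsym hτnd hcell in
/-- the fundamental sandwich expansion -/
lemma aux_LER (a : A) (l : Λ) (S T V T0 : M l) :
    C l S T * (D l T V * a)
      = ∑ Q : M l, τ (a * (C l Q T0 * D l T0 V)) • (C l S T * D l T Q) := by
  obtain ⟨r, hr⟩ := aux_Tr C D τ hdual hcell a l
  have hco : ∀ (ν : Λ) (P Q : M ν),
      τ (C ν Q P * (D l T V * a)) = τ (a * (C ν Q P * D l T V)) := by
    intro ν P Q; rw [← mul_assoc, hτsym]
  have step1 : C l S T * (D l T V * a)
      = ∑ ν : Λ, ∑ p : M ν × M ν,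
          τ (C ν p.2 p.1 * (D l T V * a)) • (C l S T * D ν p.1 p.2) := by
    conv_lhs => rw [aux_exp C D τ hdual bas hbas hτsym hτnd (D l T V * a)]
    rw [Finset.mul_sum, ← Finset.univ_sigma_univ, Finset.sum_sigma]
    exact Finset.sum_congr rfl fun ν _ =>
      Finset.sum_congr rfl fun p _ => mul_smul_comm _ _ _
  have step2 : ∀ ν : Λ, ν ≠ l → (∑ p : M ν × M ν,
      τ (C ν p.2 p.1 * (D l T V * a)) • (C l S T * D ν p.1 p.2)) = 0 := by
    intro ν hν
    refine Finset.sum_eq_zero (fun p _ => ?_)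
    by_cases hord : l < ν
    · rw [aux_CD0 C D τ hdual bas hbas hτsym hτnd hcell
        (fun hh => hν hh.symm) (fun hh => lt_asymm hord hh) S T p.1 p.2, smul_zero]
    · rw [hco, aux_T0 C D τ hdual hcell a hν hord p.2 p.1 T V, zero_smul]
  have step3 : (∑ p : M l × M l,
      τ (C l p.2 p.1 * (D l T V * a)) • (C l S T * D l p.1 p.2))
      = ∑ Q : M l, τ (a * (C l Q T0 * D l T0 V)) • (C l S T * D l T Q) := by
    rw [Fintype.sum_prod_type, Finset.sum_comm]
    refine Finset.sum_congr rfl (fun Q _ => ?_)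
    have hterm : ∀ P : M l,
        τ (C l Q P * (D l T V * a)) • (C l S T * D l P Q)
          = if P = T then r V Q • (C l S T * D l P Q) else 0 := by
      intro P
      rw [hco, hr Q P T V, ite_smul, zero_smul]
    rw [Finset.sum_congr rfl (fun P _ => hterm P),
      Finset.sum_ite_eq' Finset.univ T (fun P => r V Q • (C l S T * D l P Q)),
      if_pos (Finset.mem_univ T), hr Q T0 T0 V, if_pos rfl]
  rw [step1, Finset.sum_eq_single l (fun ν _ hν => step2 ν hν)
    (fun h => absurd (Finset.mem_univ l) h), step3]

include hbas in
lemma aux_starstar (star : A →ₗ[K] A)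
    (hstarC : ∀ (l : Λ) (S T : M l), star (C l S T) = C l T S) (x : A) :
    star (star x) = x := by
  have h : star.comp star = LinearMap.id := by
    refine Module.Basis.ext bas (fun i => ?_)
    rcases i with ⟨l, S, T⟩
    rw [LinearMap.comp_apply, LinearMap.id_apply, hbas, hstarC, hstarC]
  simpa using DFunLike.congr_fun h x

lemma aux_starlow (star : A →ₗ[K] A)
    (hstarC : ∀ (l : Λ) (S T : M l), star (C l S T) = C l T S) {l : Λ} {w : A}
    (hw : w ∈ Submodule.span K {x : A | ∃ μ : Λ, μ < l ∧ ∃ U V : M μ, x = C μ U V}) :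
    star w ∈ Submodule.span K {x : A | ∃ μ : Λ, μ < l ∧ ∃ U V : M μ, x = C μ U V} := by
  induction hw using Submodule.span_induction with
  | mem x hx =>
      obtain ⟨μ, hμ, U, V, rfl⟩ := hx
      rw [hstarC]
      exact Submodule.subset_span ⟨μ, hμ, V, U, rfl⟩
  | zero => rw [map_zero]; exact Submodule.zero_mem _
  | add x y hx hy ihx ihy => rw [map_add]; exact Submodule.add_mem _ ihx ihy
  | smul a x hx ih => rw [map_smul]; exact Submodule.smul_mem _ _ ih

include hbas hcell in
/-- right-handed version of the cellular multiplication rule -/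
lemma aux_right (star : A →ₗ[K] A) (hstar : ∀ a b : A, star (a * b) = star b * star a)
    (hstarC : ∀ (l : Λ) (S T : M l), star (C l S T) = C l T S) (a : A) (l : Λ) :
    ∃ rr : M l → M l → K, ∀ S T : M l,
      C l S T * a - ∑ T' : M l, rr T' T • C l S T' ∈
        Submodule.span K {x : A | ∃ μ : Λ, μ < l ∧ ∃ U V : M μ, x = C μ U V} := by
  obtain ⟨r, hr⟩ := hcell (star a) l
  refine ⟨r, fun S T => ?_⟩
  have hkey : star (star a * C l T S - ∑ T' : M l, r T' T • C l T' S)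
      = C l S T * a - ∑ T' : M l, r T' T • C l S T' := by
    rw [map_sub, hstar, hstarC l T S,
      aux_starstar (C := C) (bas := bas) (hbas := hbas) star hstarC a,
      map_sum]
    congr 1
    exact Finset.sum_congr rfl fun T' _ => by rw [map_smul, hstarC]
  rw [← hkey]
  exact aux_starlow (C := C) star hstarC (hr T S)

include hdual hbas hcell in
/-- the cross trace `τ(C^l D^l D^m)` vanishes for `l ≠ m`, `¬ m < l` -/
lemma aux_cross0 (star : A →ₗ[K] A) (hstar : ∀ a b : A, star (a * b) = star b * star a)
    (hstarC : ∀ (l : Λ) (S T : M l), star (C l S T) = C l T S)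
    {l m : Λ} (hne : l ≠ m) (hnm : ¬ m < l) (S T V : M l) (U W : M m) :
    τ ((C l S T * D l T V) * D m U W) = 0 := by
  obtain ⟨rr, hrr⟩ := aux_right (C := C) (bas := bas) (hbas := hbas) (hcell := hcell)
    star hstar hstarC (D l T V) l
  have hw := hrr S T
  set w := C l S T * D l T V - ∑ T' : M l, rr T' T • C l S T' with hwdef
  have hsplit : (C l S T * D l T V) * D m U W
      = (∑ T' : M l, rr T' T • C l S T') * D m U W + w * D m U W := by
    rw [add_comm, hwdef, ← add_mul, sub_add_cancel]
  rw [hsplit, map_add, aux_low_tau C D τ hdual hnm hw U W, add_zero,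
    Finset.sum_mul, map_sum]
  refine Finset.sum_eq_zero (fun T' _ => ?_)
  rw [smul_mul_assoc, map_smul, aux_dual_ne C D τ hdual hne, smul_zero]

include hdual in
/-- evaluation of the `Φ`-trace -/
lemma aux_phi_ev (Φ : ∀ l : Λ, M l → M l → K)
    (hΦ : ∀ (l : Λ) (S T U V : M l),
      C l S T * C l U V - Φ l T U • C l S V ∈
        Submodule.span K {x : A | ∃ μ : Λ, μ < l ∧ ∃ U' V' : M μ, x = C μ U' V'})
    (l : Λ) (U V Q T S : M l) :
    τ (C l U V * (C l Q T * D l T S)) = Φ l V Q * (if U = S then 1 else 0) := by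
  have hm := hΦ l U V Q T
  set w := C l U V * C l Q T - Φ l V Q • C l U T with hwdef
  have hsplit : C l U V * (C l Q T * D l T S)
      = (Φ l V Q • C l U T) * D l T S + w * D l T S := by
    rw [add_comm, hwdef, ← add_mul, sub_add_cancel, mul_assoc]
  rw [hsplit, map_add, aux_low_tau C D τ hdual (lt_irrefl l) hm, add_zero,
    smul_mul_assoc, map_smul, smul_eq_mul, aux_dual_same C D τ hdual]
  congr 1
  by_cases h : U = S <;> simp [h]

include hdual hbas hτsym hτnd hcell in
/-- evaluation of the `Φ'`-trace -/
lemma aux_phi'_ev (Φ' : ∀ l : Λ, M l → M l → K)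
    (hΦ' : ∀ (l : Λ) (S T U V : M l),
      D l S T * D l U V - Φ' l T U • D l S V ∈
        Submodule.span K {x : A | ∃ μ : Λ, l < μ ∧ ∃ U' V' : M μ, x = D μ U' V'})
    (l : Λ) (Q S Q2 U V : M l) :
    τ (C l Q S * (D l S Q2 * D l U V)) = Φ' l Q2 U * (if Q = V then 1 else 0) := by
  have hm := hΦ' l S Q2 U V
  set v := D l S Q2 * D l U V - Φ' l Q2 U • D l S V with hvdef
  have hDD : D l S Q2 * D l U V = Φ' l Q2 U • D l S V + v := by
    rw [hvdef, add_comm, sub_add_cancel]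
  rw [hDD, mul_add, mul_smul_comm, map_add, map_smul, smul_eq_mul,
    aux_Cup0 C D τ hdual bas hbas hτsym hτnd hcell hm (lt_irrefl l) Q S, map_zero,
    add_zero, aux_dual_same C D τ hdual]
  congr 1
  by_cases h : Q = V <;> simp [h]

lemma aux_assoc4 {A : Type} [Ring A] (a b c d : A) : (a*b)*(c*d) = (a*(b*c))*d := by
  rw [mul_assoc, ← mul_assoc b, ← mul_assoc]

include hdual hbas hτsym hτnd hcell in
/-- evaluation of the fundamental same-cell 4-fold trace -/
lemma aux_sig_same (Φ Φ' : ∀ l : Λ, M l → M l → K)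
    (hΦ : ∀ (l : Λ) (S T U V : M l),
      C l S T * C l U V - Φ l T U • C l S V ∈
        Submodule.span K {x : A | ∃ μ : Λ, μ < l ∧ ∃ U' V' : M μ, x = C μ U' V'})
    (hΦ' : ∀ (l : Λ) (S T U V : M l),
      D l S T * D l U V - Φ' l T U • D l S V ∈
        Submodule.span K {x : A | ∃ μ : Λ, l < μ ∧ ∃ U' V' : M μ, x = D μ U' V'})
    (k : Λ → K)
    (hk : ∀ l : Λ, (Matrix.of (Φ l)) * (Matrix.of (Φ' l)) = k l • (1 : Matrix (M l) (M l) K))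
    (l : Λ) (U Q S : M l) :
    τ ((C l U U * D l U U) * (C l Q S * D l S S))
      = (if Q = U then 1 else 0) * ((if U = S then 1 else 0) * k l) := by
  have hkk : ∑ Q₁ : M l, Φ l S Q₁ * Φ' l Q₁ S = k l := by
    have h : (Matrix.of (Φ l) * Matrix.of (Φ' l)) S S
        = ((k l) • (1 : Matrix (M l) (M l) K)) S S := by rw [hk l]
    rw [Matrix.mul_apply] at h
    simpa [Matrix.one_apply] using h
  rw [aux_assoc4,
    aux_LER C D τ hdual bas hbas hτsym hτnd hcell (C l Q S) l U U U U,
    Finset.sum_mul, map_sum]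
  have hterm : ∀ Q₁ : M l,
      τ ((τ (C l Q S * (C l Q₁ U * D l U U)) • (C l U U * D l U Q₁)) * D l S S)
        = (if Q = U then 1 else 0) * (Φ l S Q₁ * (Φ' l Q₁ S * (if U = S then 1 else 0))) := by
    intro Q₁
    rw [smul_mul_assoc, map_smul, smul_eq_mul,
      aux_phi_ev C D τ hdual Φ hΦ l Q S Q₁ U U, mul_assoc (C l U U),
      aux_phi'_ev C D τ hdual bas hbas hτsym hτnd hcell Φ' hΦ' l U U Q₁ S S]
    ring
  rw [Finset.sum_congr rfl (fun Q₁ _ => hterm Q₁), ← Finset.mul_sum]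
  congr 1
  calc ∑ Q₁ : M l, Φ l S Q₁ * (Φ' l Q₁ S * (if U = S then 1 else 0))
      = (∑ Q₁ : M l, Φ l S Q₁ * Φ' l Q₁ S) * (if U = S then 1 else 0) := by
        rw [Finset.sum_mul]
        exact Finset.sum_congr rfl fun Q₁ _ => by ring
    _ = (if U = S then 1 else 0) * k l := by rw [hkk]; ring

end aux

/-- Lemma 4.2: `e_{λ,c} e_{μ,c′} = δ_{λμ} δ_{cc′} k_λ e_{λ,c}`. -/
theorem stmt8
    {K A : Type} [Field K] [Ring A] [Algebra K A] [FiniteDimensional K A]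
    {Λ : Type} [PartialOrder Λ] [Fintype Λ]
    {M : Λ → Type} [∀ l : Λ, Fintype (M l)]
    (C : ∀ l : Λ, M l → M l → A)
    (bas : Module.Basis (Σ l : Λ, M l × M l) K A)
    (hbas : ∀ (l : Λ) (S T : M l), bas ⟨l, (S, T)⟩ = C l S T)
    (star : A →ₗ[K] A)
    (hstar : ∀ a b : A, star (a * b) = star b * star a)
    (hstarC : ∀ (l : Λ) (S T : M l), star (C l S T) = C l T S)
    (hcell : ∀ (a : A) (l : Λ), ∃ r : M l → M l → K, ∀ S T : M l,
      a * C l S T - ∑ S' : M l, r S' S • C l S' T ∈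
        Submodule.span K {x : A | ∃ μ : Λ, μ < l ∧ ∃ U V : M μ, x = C μ U V})
    (τ : A →ₗ[K] K)
    (hτsym : ∀ a b : A, τ (a * b) = τ (b * a))
    (hτnd : ∀ a : A, a ≠ 0 → ∃ b : A, τ (a * b) ≠ 0)
    (D : ∀ l : Λ, M l → M l → A)
    (hdual : ∀ (l μ : Λ) (S T : M l) (U V : M μ),
      τ (C l S T * D μ U V) =
        if (⟨l, (S, T)⟩ : Σ l : Λ, M l × M l) = ⟨μ, (V, U)⟩ then 1 else 0)
    (𝒜 : ℤ → Submodule K A) [GradedAlgebra 𝒜]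
    (deg : ∀ l : Λ, M l → ℤ)
    (hhom : ∀ (l : Λ) (S T : M l), C l S T ∈ 𝒜 (deg l S + deg l T))
    (d : ℤ)
    (hτhom : ∀ i : ℤ, i ≠ -d → ∀ a ∈ 𝒜 i, τ a = 0)
    (Φ Φ' : ∀ l : Λ, M l → M l → K)
    (hΦ : ∀ (l : Λ) (S T U V : M l),
      C l S T * C l U V - Φ l T U • C l S V ∈
        Submodule.span K {x : A | ∃ μ : Λ, μ < l ∧ ∃ U' V' : M μ, x = C μ U' V'})
    (hΦ' : ∀ (l : Λ) (S T U V : M l),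
      D l S T * D l U V - Φ' l T U • D l S V ∈
        Submodule.span K {x : A | ∃ μ : Λ, l < μ ∧ ∃ U' V' : M μ, x = D μ U' V'})
    (k : Λ → K)
    (hk : ∀ l : Λ, (Matrix.of (Φ l)) * (Matrix.of (Φ' l)) = k l • (1 : Matrix (M l) (M l) K))
    (e : ∀ _ : Λ, ℤ → A)
    (he : ∀ (l : Λ) (c : ℤ),
      e l c = ∑ S ∈ Finset.univ.filter (fun S : M l => deg l S = c), C l S S * D l S S)
    :
    ∀ (l μ : Λ) (c c' : ℤ),
      e l c * e μ c' = if l = μ ∧ c = c' then k l • e l c else 0 := by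
  intro lam mu c c'
  by_cases hlm : lam = mu
  · subst hlm
    have hXX : ∀ S U : M lam, (C lam S S * D lam S S) * (C lam U U * D lam U U)
        = if U = S then k lam • (C lam S S * D lam S S) else 0 := by
      intro S U
      rw [mul_assoc, aux_LER C D τ hdual bas hbas hτsym hτnd hcell
        (C lam U U * D lam U U) lam S S S S]
      have hterm : ∀ Q : M lam,
          τ ((C lam U U * D lam U U) * (C lam Q S * D lam S S)) • (C lam S S * D lam S Q)
            = if Q = U then ((if U = S then 1 else 0) * k lam) • (C lam S S * D lam S Q)
              else 0 := by
        intro Q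
        rw [aux_sig_same C D τ hdual bas hbas hτsym hτnd hcell Φ Φ' hΦ hΦ' k hk lam U Q S,
          ite_mul, one_mul, zero_mul, ite_smul, zero_smul]
      rw [Finset.sum_congr rfl (fun Q _ => hterm Q),
        Finset.sum_ite_eq' Finset.univ U
          (fun Q => ((if U = S then 1 else 0) * k lam) • (C lam S S * D lam S Q)),
        if_pos (Finset.mem_univ U)]
      by_cases hUS : U = S
      · subst hUS; rw [if_pos rfl, if_pos rfl, one_mul]
      · rw [if_neg hUS, if_neg hUS, zero_mul, zero_smul]
    rw [he lam c, he lam c', Finset.sum_mul_sum]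
    have hsum : ∀ S : M lam,
        (∑ U ∈ Finset.univ.filter (fun U : M lam => deg lam U = c'),
          (C lam S S * D lam S S) * (C lam U U * D lam U U))
          = if S ∈ Finset.univ.filter (fun U : M lam => deg lam U = c')
              then k lam • (C lam S S * D lam S S) else 0 := by
      intro S
      rw [Finset.sum_congr rfl (fun U _ => hXX S U),
        Finset.sum_ite_eq' (Finset.univ.filter (fun U : M lam => deg lam U = c')) S
          (fun _ => k lam • (C lam S S * D lam S S))]
    rw [Finset.sum_congr rfl (fun S _ => hsum S)]
    by_cases hcc : c = c'
    · subst hcc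
      rw [if_pos ⟨rfl, rfl⟩, Finset.smul_sum]
      exact Finset.sum_congr rfl fun S hS => if_pos hS
    · rw [if_neg (fun h => hcc h.2)]
      refine Finset.sum_eq_zero fun S hS => ?_
      rw [if_neg]
      intro hS'
      rw [Finset.mem_filter] at hS hS'
      exact hcc (hS.2.symm.trans hS'.2)
  · have hX0 : ∀ (S : M lam) (U : M mu),
        (C lam S S * D lam S S) * (C mu U U * D mu U U) = 0 := by
      intro S U
      rw [mul_assoc, aux_LER C D τ hdual bas hbas hτsym hτnd hcell
        (C mu U U * D mu U U) lam S S S S]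
      refine Finset.sum_eq_zero fun Q _ => ?_
      have hz : τ ((C mu U U * D mu U U) * (C lam Q S * D lam S S)) = 0 := by
        by_cases hord : lam < mu
        · rw [hτsym, aux_assoc4,
            aux_LER C D τ hdual bas hbas hτsym hτnd hcell (C mu U U) lam Q S S S,
            Finset.sum_mul, map_sum]
          refine Finset.sum_eq_zero fun Q₂ _ => ?_
          rw [smul_mul_assoc, map_smul,
            aux_cross0 C D τ hdual bas hbas hcell star hstar hstarC hlm
              (fun hh => lt_asymm hord hh) Q S Q₂ U U, smul_zero]
        · rw [aux_assoc4,
            aux_LER C D τ hdual bas hbas hτsym hτnd hcell (C lam Q S) mu U U U U,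
            Finset.sum_mul, map_sum]
          refine Finset.sum_eq_zero fun Q₁ _ => ?_
          rw [smul_mul_assoc, map_smul,
            aux_cross0 C D τ hdual bas hbas hcell star hstar hstarC
              (Ne.symm hlm) hord U U Q₁ S S, smul_zero]
      rw [hz, zero_smul]
    rw [he lam c, he mu c', Finset.sum_mul_sum, if_neg (fun h => hlm h.1)]
    exact Finset.sum_eq_zero fun S _ => Finset.sum_eq_zero fun U _ => hX0 S U
end

section
/- Let A be a graded symmetric cellular algebra with homogeneous symmetrizing trace. Then for every λ ∈ Λ and c ∈ ℤ, the element e_{λ,c} = Σ_{S∈M(λ), deg(S)=c} C^λ_{S,S} D^λ_{S,S} lies in the centralizer Z_A(A_0) of the degree-zero component. Consequently L_gr(A) = span_K{ e_{λ,c} : λ∈Λ, c∈ℤ } ⊆ Z_A(A_0). -/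
open scoped Classical

/-- Lemma 4.2 / Theorem 4.4 (second inclusion): each `e_{λ,c}` lies in the
centralizer of `A₀`, hence `L_gr(A) ⊆ Z_A(A₀)`. -/
theorem stmt9
    {K A : Type} [Field K] [Ring A] [Algebra K A] [FiniteDimensional K A]
    {Λ : Type} [PartialOrder Λ] [Fintype Λ]
    {M : Λ → Type} [∀ l : Λ, Fintype (M l)]
    (C : ∀ l : Λ, M l → M l → A)
    (bas : Module.Basis (Σ l : Λ, M l × M l) K A)
    (hbas : ∀ (l : Λ) (S T : M l), bas ⟨l, (S, T)⟩ = C l S T)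
    (star : A →ₗ[K] A)
    (hstar : ∀ a b : A, star (a * b) = star b * star a)
    (hstarC : ∀ (l : Λ) (S T : M l), star (C l S T) = C l T S)
    (hcell : ∀ (a : A) (l : Λ), ∃ r : M l → M l → K, ∀ S T : M l,
      a * C l S T - ∑ S' : M l, r S' S • C l S' T ∈
        Submodule.span K {x : A | ∃ μ : Λ, μ < l ∧ ∃ U V : M μ, x = C μ U V})
    (τ : A →ₗ[K] K)
    (hτsym : ∀ a b : A, τ (a * b) = τ (b * a))
    (hτnd : ∀ a : A, a ≠ 0 → ∃ b : A, τ (a * b) ≠ 0)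
    (D : ∀ l : Λ, M l → M l → A)
    (hdual : ∀ (l μ : Λ) (S T : M l) (U V : M μ),
      τ (C l S T * D μ U V) =
        if (⟨l, (S, T)⟩ : Σ l : Λ, M l × M l) = ⟨μ, (V, U)⟩ then 1 else 0)
    (𝒜 : ℤ → Submodule K A) [GradedAlgebra 𝒜]
    (deg : ∀ l : Λ, M l → ℤ)
    (hhom : ∀ (l : Λ) (S T : M l), C l S T ∈ 𝒜 (deg l S + deg l T))
    (d : ℤ)
    (hτhom : ∀ i : ℤ, i ≠ -d → ∀ a ∈ 𝒜 i, τ a = 0)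
    (e : ∀ _ : Λ, ℤ → A)
    (he : ∀ (l : Λ) (c : ℤ),
      e l c = ∑ S ∈ Finset.univ.filter (fun S : M l => deg l S = c), C l S S * D l S S)
    :
    (∀ (l : Λ) (c : ℤ), ∀ b ∈ 𝒜 0, e l c * b = b * e l c) ∧
    (∀ z ∈ Submodule.span K {z : A | ∃ (l : Λ) (c : ℤ), z = e l c},
      ∀ b ∈ 𝒜 0, z * b = b * z) := by
  classical
  -- the span of strictly lower cellular basis elements
  set LS : Λ → Set A := fun l => {x : A | ∃ μ : Λ, μ < l ∧ ∃ U V : M μ, x = C μ U V}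
    with hLS
  -- lower span is stable under left multiplication
  have hmulLow : ∀ (a : A) (l : Λ), ∀ x ∈ Submodule.span K (LS l),
      a * x ∈ Submodule.span K (LS l) := by
    intro a l x hx
    induction hx using Submodule.span_induction with
    | mem x hx =>
      obtain ⟨μ, hμ, U, V, rfl⟩ := hx
      obtain ⟨r, hr⟩ := hcell a μ
      have h1 := hr U V
      have hle : Submodule.span K (LS μ) ≤ Submodule.span K (LS l) :=
        Submodule.span_mono (by
          rintro y ⟨ν, hν, P, Q, rfl⟩
          exact ⟨ν, hν.trans hμ, P, Q, rfl⟩)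
      have h2 : (∑ U' : M μ, r U' U • C μ U' V) ∈ Submodule.span K (LS l) :=
        Submodule.sum_mem _ (fun U' _ =>
          Submodule.smul_mem _ _ (Submodule.subset_span ⟨μ, hμ, U', V, rfl⟩))
      have := (Submodule.span K (LS l)).add_mem (hle h1) h2
      simpa using this
    | zero => simp
    | add x y _ _ hx hy => rw [mul_add]; exact add_mem hx hy
    | smul k x _ hx => rw [mul_smul_comm]; exact Submodule.smul_mem _ _ hx
  -- lower terms are annihilated by τ(· * D l S S)
  have hτLow : ∀ (l : Λ) (S : M l), ∀ x ∈ Submodule.span K (LS l),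
      τ (x * D l S S) = 0 := by
    intro l S x hx
    induction hx using Submodule.span_induction with
    | mem x hx =>
      obtain ⟨μ, hμ, U, V, rfl⟩ := hx
      rw [hdual, if_neg]
      intro h
      rw [Sigma.mk.inj_iff] at h
      exact absurd h.1 (ne_of_lt hμ)
    | zero => simp
    | add x y _ _ hx hy => rw [add_mul, map_add, hx, hy, add_zero]
    | smul k x _ hx => rw [smul_mul_assoc, map_smul, hx, smul_zero]
  -- key trace formula
  have hkey : ∀ (l : Λ) (a : A) (r : M l → M l → K),
      (∀ S T : M l, a * C l S T - ∑ S' : M l, r S' S • C l S' T ∈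
        Submodule.span K (LS l)) →
      ∀ S : M l, τ (a * (C l S S * D l S S)) = r S S := by
    intro l a r hr S
    have h1 := hr S S
    rw [← mul_assoc,
      show a * C l S S =
        (a * C l S S - ∑ S' : M l, r S' S • C l S' S) + ∑ S' : M l, r S' S • C l S' S
        from (sub_add_cancel _ _).symm,
      add_mul, map_add, hτLow l S _ h1, zero_add, Finset.sum_mul]
    simp only [smul_mul_assoc, map_sum, map_smul, hdual, smul_eq_mul,
      Sigma.mk.inj_iff, heq_eq_eq, Prod.mk.injEq, true_and, and_true]
    simp [mul_ite, Finset.sum_ite_eq']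
  -- composition of cell coefficient matrices
  have hcomp : ∀ (l : Λ) (a a' : A) (r r' : M l → M l → K),
      (∀ S T : M l, a * C l S T - ∑ S' : M l, r S' S • C l S' T ∈
        Submodule.span K (LS l)) →
      (∀ S T : M l, a' * C l S T - ∑ S' : M l, r' S' S • C l S' T ∈
        Submodule.span K (LS l)) →
      ∀ S T : M l, (a' * a) * C l S T
        - ∑ S'' : M l, (∑ S' : M l, r' S'' S' * r S' S) • C l S'' T ∈
          Submodule.span K (LS l) := by
    intro l a a' r r' hva hva' S T
    have hswap : ∑ S'' : M l, (∑ S' : M l, r' S'' S' * r S' S) • C l S'' T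
        = ∑ S' : M l, ∑ S'' : M l, (r S' S * r' S'' S') • C l S'' T := by
      simp only [Finset.sum_smul]
      rw [Finset.sum_comm]
      exact Finset.sum_congr rfl fun S' _ =>
        Finset.sum_congr rfl fun S'' _ => by rw [mul_comm]
    have key : (a' * a) * C l S T
        - ∑ S'' : M l, (∑ S' : M l, r' S'' S' * r S' S) • C l S'' T
        = a' * (a * C l S T - ∑ S' : M l, r S' S • C l S' T)
          + ∑ S' : M l, r S' S •
              (a' * C l S' T - ∑ S'' : M l, r' S'' S' • C l S'' T) := by
      rw [hswap]
      simp only [mul_sub, Finset.mul_sum, mul_smul_comm, smul_sub, Finset.smul_sum,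
        smul_smul, Finset.sum_sub_distrib, mul_assoc]
      abel
    rw [key]
    exact add_mem (hmulLow a' l _ (hva S T))
      (Submodule.sum_mem _ fun S' _ => Submodule.smul_mem _ _ (hva' S' T))
  -- graded refinement of the cell coefficients for degree-0 elements
  have hgraded : ∀ b ∈ 𝒜 0, ∀ l : Λ, ∃ t : M l → M l → K,
      (∀ S T : M l, b * C l S T - ∑ S' : M l, t S' S • C l S' T ∈
        Submodule.span K (LS l)) ∧
      (∀ S' S : M l, deg l S' ≠ deg l S → t S' S = 0) := by
    intro b hb l
    obtain ⟨r, hr⟩ := hcell b l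
    refine ⟨fun S' S => if deg l S' = deg l S then r S' S else 0, ?_, ?_⟩
    · intro S T
      have hx : b * C l S T - ∑ S' : M l, r S' S • C l S' T ∈
          Submodule.span K (LS l) := hr S T
      set i := deg l S + deg l T with hi
      have hproj : ∀ x ∈ Submodule.span K (LS l),
          ((DirectSum.decompose 𝒜 x i : A)) ∈ Submodule.span K (LS l) := by
        intro x hx
        induction hx using Submodule.span_induction with
        | mem x hx =>
          obtain ⟨μ, hμ, U, V, rfl⟩ := hx
          by_cases hdeg : deg μ U + deg μ V = i
          · rw [DirectSum.decompose_of_mem_same 𝒜 (hdeg ▸ hhom μ U V)]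
            exact Submodule.subset_span ⟨μ, hμ, U, V, rfl⟩
          · rw [DirectSum.decompose_of_mem_ne 𝒜 (hhom μ U V) hdeg]
            exact zero_mem _
        | zero => simp
        | add x y _ _ hx hy =>
          rw [DirectSum.decompose_add, DirectSum.add_apply]
          push_cast
          exact add_mem hx hy
        | smul k x _ hx =>
          rw [DirectSum.decompose_smul, DirectSum.smul_apply]
          push_cast
          exact Submodule.smul_mem _ _ hx
      have h2 := hproj _ hx
      have h3 : ((DirectSum.decompose 𝒜
            (b * C l S T - ∑ S' : M l, r S' S • C l S' T) i : A))
          = b * C l S T - ∑ S' : M l,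
              (if deg l S' = deg l S then r S' S else 0) • C l S' T := by
        have hbC : b * C l S T ∈ 𝒜 i := by
          have := SetLike.mul_mem_graded hb (hhom l S T)
          rwa [zero_add] at this
        have hsum : ((DirectSum.decompose 𝒜
              (∑ S' : M l, r S' S • C l S' T) i : A))
            = ∑ S' : M l, (if deg l S' = deg l S then r S' S else 0) • C l S' T := by
          rw [DirectSum.decompose_sum, DFinsupp.finset_sum_apply]
          push_cast
          refine Finset.sum_congr rfl fun S' _ => ?_
          rw [DirectSum.decompose_smul, DirectSum.smul_apply]
          push_cast
          by_cases hdeg : deg l S' = deg l S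
          · rw [DirectSum.decompose_of_mem_same 𝒜
              (show C l S' T ∈ 𝒜 i by rw [hi, ← hdeg]; exact hhom l S' T)]
            rw [if_pos hdeg]
          · rw [DirectSum.decompose_of_mem_ne 𝒜 (hhom l S' T)
              (by rw [hi]; intro hcon; exact hdeg (by omega))]
            rw [if_neg hdeg, zero_smul, smul_zero]
        rw [DirectSum.decompose_sub, DirectSum.sub_apply]
        push_cast
        rw [DirectSum.decompose_of_mem_same 𝒜 hbC]
        rw [hsum]
      rwa [h3] at h2
    · intro S' S hne
      simp [if_neg hne]
  -- τ(e l c * a) in terms of cell coefficients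
  have hτe : ∀ (l : Λ) (c : ℤ) (a : A) (r : M l → M l → K),
      (∀ S T : M l, a * C l S T - ∑ S' : M l, r S' S • C l S' T ∈
        Submodule.span K (LS l)) →
      τ (e l c * a)
        = ∑ S ∈ Finset.univ.filter (fun S : M l => deg l S = c), r S S := by
    intro l c a r hr
    rw [he, Finset.sum_mul, map_sum]
    refine Finset.sum_congr rfl fun S _ => ?_
    rw [hτsym]
    exact hkey l a r hr S
  -- the main commutation
  have hmain : ∀ (l : Λ) (c : ℤ), ∀ b ∈ 𝒜 0, e l c * b = b * e l c := by
    intro l c b hb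
    obtain ⟨t, ht, ht0⟩ := hgraded b hb l
    have hz : ∀ z : A, τ ((e l c * b - b * e l c) * z) = 0 := by
      have hbase : ∀ i : (Σ l : Λ, M l × M l),
          τ ((e l c * b - b * e l c) * bas i) = 0 := by
        rintro ⟨ν, P, Q⟩
        rw [hbas]
        obtain ⟨s, hs⟩ := hcell (C ν P Q) l
        have h1 : τ (e l c * (b * C ν P Q))
            = ∑ S ∈ Finset.univ.filter (fun S : M l => deg l S = c),
                ∑ S' : M l, t S S' * s S' S :=
          hτe l c _ _ (hcomp l (C ν P Q) b s t hs ht)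
        have h2 : τ (e l c * (C ν P Q * b))
            = ∑ S ∈ Finset.univ.filter (fun S : M l => deg l S = c),
                ∑ S' : M l, s S S' * t S' S :=
          hτe l c _ _ (hcomp l b (C ν P Q) t s ht hs)
        have hrw : τ ((e l c * b - b * e l c) * C ν P Q)
            = τ (e l c * (b * C ν P Q)) - τ (e l c * (C ν P Q * b)) := by
          rw [sub_mul, map_sub, mul_assoc, mul_assoc, hτsym b _, mul_assoc]
        rw [hrw, h1, h2]
        -- the two sums agree
        set F := Finset.univ.filter (fun S : M l => deg l S = c) with hF
        have hres1 : ∀ S ∈ F, ∑ S' : M l, t S S' * s S' S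
            = ∑ S' ∈ F, t S S' * s S' S := by
          intro S hS
          refine (Finset.sum_subset (Finset.subset_univ F) ?_).symm
          intro S' _ hS'
          have hdS : deg l S = c := by simpa [hF] using hS
          have hdS' : deg l S' ≠ c := by simpa [hF] using hS'
          rw [ht0 S S' (fun h => hdS' (h.symm.trans hdS)), zero_mul]
        have hres2 : ∀ S ∈ F, ∑ S' : M l, s S S' * t S' S
            = ∑ S' ∈ F, s S S' * t S' S := by
          intro S hS
          refine (Finset.sum_subset (Finset.subset_univ F) ?_).symm
          intro S' _ hS'
          have hdS : deg l S = c := by simpa [hF] using hS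
          have hdS' : deg l S' ≠ c := by simpa [hF] using hS'
          rw [ht0 S' S (fun h => hdS' (h.trans hdS)), mul_zero]
        rw [Finset.sum_congr rfl hres1, Finset.sum_congr rfl hres2]
        rw [Finset.sum_comm]
        rw [sub_eq_zero]
        exact Finset.sum_congr rfl fun S _ =>
          Finset.sum_congr rfl fun S' _ => mul_comm _ _
      intro z
      have hrep := bas.sum_repr z
      rw [← hrep, Finset.mul_sum, map_sum]
      refine Finset.sum_eq_zero fun i _ => ?_
      rw [mul_smul_comm, map_smul, hbase i, smul_zero]
    have h0 : e l c * b - b * e l c = 0 := by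
      by_contra hne
      obtain ⟨z, hz'⟩ := hτnd _ hne
      exact hz' (hz z)
    exact sub_eq_zero.mp h0
  refine ⟨hmain, ?_⟩
  intro z hz b hb
  induction hz using Submodule.span_induction with
  | mem x hx =>
    obtain ⟨l, c, rfl⟩ := hx
    exact hmain l c b hb
  | zero => simp
  | add x y _ _ hx hy => rw [add_mul, mul_add, hx, hy]
  | smul k x _ hx => rw [smul_mul_assoc, mul_smul_comm, hx]
end

section
/- Let A be a finite dimensional semisimple K-algebra which is a graded symmetric cellular algebra with homogeneous symmetrizing trace τ of degree d and homogeneous cellular basis {C^λ_{S,T}}. Then d = 0. -/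
open scoped Classical

/-- In a semisimple ring, `a A a = 0` implies `a = 0`. -/
lemma stmt13_aux_ss {A : Type} [Ring A] [IsSemisimpleRing A] (a : A)
    (h : ∀ x : A, a * x * a = 0) : a = 0 := by
  obtain ⟨J, hJ⟩ := exists_isCompl (Submodule.span A {a} : Submodule A A)
  have h1 : (1 : A) ∈ Submodule.span A {a} ⊔ J := by rw [hJ.sup_eq_top]; trivial
  obtain ⟨e, he, f, hf, hef⟩ := Submodule.mem_sup.mp h1
  obtain ⟨r, hr⟩ := Submodule.mem_span_singleton.mp he
  have hae : a * e = 0 := by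
    rw [← hr, smul_eq_mul, ← mul_assoc]
    exact h r
  have haf : a = a * f := by
    calc a = a * (e + f) := by rw [hef, mul_one]
    _ = a * f := by rw [mul_add, hae, zero_add]
  have haJ : a ∈ J := by
    have := J.smul_mem a hf
    rwa [smul_eq_mul, ← haf] at this
  have haI : a ∈ (Submodule.span A {a} : Submodule A A) :=
    Submodule.mem_span_singleton_self a
  have : a ∈ (Submodule.span A {a} : Submodule A A) ⊓ J := ⟨haI, haJ⟩
  rw [hJ.inf_eq_bot] at this
  simpa using this

/-- Lemma 5.4: a finite dimensional semisimple graded symmetric cellular algebra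
has homogeneous symmetrizing trace of degree `0`. -/
theorem stmt13
    {K A : Type} [Field K] [Ring A] [Algebra K A] [FiniteDimensional K A]
    {Λ : Type} [PartialOrder Λ] [Fintype Λ]
    {M : Λ → Type} [∀ l : Λ, Fintype (M l)]
    (C : ∀ l : Λ, M l → M l → A)
    (bas : Module.Basis (Σ l : Λ, M l × M l) K A)
    (hbas : ∀ (l : Λ) (S T : M l), bas ⟨l, (S, T)⟩ = C l S T)
    (star : A →ₗ[K] A)
    (hstar : ∀ a b : A, star (a * b) = star b * star a)
    (hstarC : ∀ (l : Λ) (S T : M l), star (C l S T) = C l T S)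
    (hcell : ∀ (a : A) (l : Λ), ∃ r : M l → M l → K, ∀ S T : M l,
      a * C l S T - ∑ S' : M l, r S' S • C l S' T ∈
        Submodule.span K {x : A | ∃ μ : Λ, μ < l ∧ ∃ U V : M μ, x = C μ U V})
    [Nontrivial A] [IsSemisimpleRing A]
    (τ : A →ₗ[K] K)
    (hτsym : ∀ a b : A, τ (a * b) = τ (b * a))
    (hτnd : ∀ a : A, a ≠ 0 → ∃ b : A, τ (a * b) ≠ 0)
    (D : ∀ l : Λ, M l → M l → A)
    (hdual : ∀ (l μ : Λ) (S T : M l) (U V : M μ),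
      τ (C l S T * D μ U V) =
        if (⟨l, (S, T)⟩ : Σ l : Λ, M l × M l) = ⟨μ, (V, U)⟩ then 1 else 0)
    (𝒜 : ℤ → Submodule K A) [GradedAlgebra 𝒜]
    (deg : ∀ l : Λ, M l → ℤ)
    (hhom : ∀ (l : Λ) (S T : M l), C l S T ∈ 𝒜 (deg l S + deg l T))
    (d : ℤ)
    (hτhom : ∀ i : ℤ, i ≠ -d → ∀ a ∈ 𝒜 i, τ a = 0)
    :
    d = 0 := by
  classical
  -- the support of the grading is finite
  have hfin : Set.Finite {i : ℤ | 𝒜 i ≠ ⊥} :=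
    WellFoundedGT.finite_ne_bot_of_iSupIndep
      (DirectSum.Decomposition.isInternal 𝒜).submodule_iSupIndep
  have h0 : (0 : ℤ) ∈ hfin.toFinset := by
    rw [Set.Finite.mem_toFinset]
    intro hbot
    have h1 : (1 : A) ∈ 𝒜 0 := SetLike.one_mem_graded 𝒜
    rw [hbot] at h1
    exact one_ne_zero (Submodule.mem_bot K |>.mp h1)
  have hne : hfin.toFinset.Nonempty := ⟨0, h0⟩
  set m := hfin.toFinset.max' hne with hm
  set n := hfin.toFinset.min' hne with hn
  have hmS : 𝒜 m ≠ ⊥ := by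
    have := hfin.toFinset.max'_mem hne
    rwa [Set.Finite.mem_toFinset] at this
  have hnS : 𝒜 n ≠ ⊥ := by
    have := hfin.toFinset.min'_mem hne
    rwa [Set.Finite.mem_toFinset] at this
  have hle_m : ∀ i : ℤ, 𝒜 i ≠ ⊥ → i ≤ m := fun i hi =>
    hfin.toFinset.le_max' i (hfin.mem_toFinset.mpr hi)
  have hge_n : ∀ i : ℤ, 𝒜 i ≠ ⊥ → n ≤ i := fun i hi =>
    hfin.toFinset.min'_le i (hfin.mem_toFinset.mpr hi)
  -- pairing: if 𝒜 i ≠ ⊥ then 𝒜 (-d - i) ≠ ⊥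
  have hpair : ∀ i : ℤ, 𝒜 i ≠ ⊥ → 𝒜 (-d - i) ≠ ⊥ := by
    intro i hi
    obtain ⟨a, haA, ha0⟩ := Submodule.exists_mem_ne_zero_of_ne_bot hi
    obtain ⟨b, hb⟩ := hτnd a ha0
    have hbsum : b = ∑ j ∈ (DirectSum.decompose 𝒜 b).support,
        ((DirectSum.decompose 𝒜 b) j : A) :=
      (DirectSum.sum_support_decompose 𝒜 b).symm
    have hsum : τ (a * b) = ∑ j ∈ (DirectSum.decompose 𝒜 b).support,
        τ (a * ((DirectSum.decompose 𝒜 b) j : A)) := by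
      conv_lhs => rw [hbsum]
      rw [Finset.mul_sum, map_sum]
    rw [hsum] at hb
    obtain ⟨j, hjmem, hj⟩ := Finset.exists_ne_zero_of_sum_ne_zero hb
    have hij : i + j = -d := by
      by_contra hne'
      exact hj (hτhom (i + j) hne' _
        (SetLike.mul_mem_graded haA (DirectSum.decompose 𝒜 b j).2))
    have hjne : ((DirectSum.decompose 𝒜 b) j : A) ≠ 0 := by
      intro h0'
      apply hj
      rw [h0', mul_zero, map_zero]
    intro hbot
    have hji : j = -d - i := by omega
    apply hjne
    have hbot' : 𝒜 j = ⊥ := by rw [hji]; exact hbot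
    exact (Submodule.eq_bot_iff _).mp hbot' _ (DirectSum.decompose 𝒜 b j).2
  -- hence m + n = -d
  have hmn : m + n = -d := by
    have h1 : n ≤ -d - m := hge_n _ (hpair m hmS)
    have h2 : -d - n ≤ m := hle_m _ (hpair n hnS)
    omega
  by_contra hd
  rcases lt_or_gt_of_ne hd with hdlt | hdgt
  · -- d < 0 : m + n > 0, elements of 𝒜 m kill everything
    obtain ⟨a, haA, ha0⟩ := Submodule.exists_mem_ne_zero_of_ne_bot hmS
    apply ha0
    apply stmt13_aux_ss
    intro x
    have hxsum : x = ∑ j ∈ (DirectSum.decompose 𝒜 x).support,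
        ((DirectSum.decompose 𝒜 x) j : A) :=
      (DirectSum.sum_support_decompose 𝒜 x).symm
    have : a * x * a = ∑ j ∈ (DirectSum.decompose 𝒜 x).support,
        a * ((DirectSum.decompose 𝒜 x) j : A) * a := by
      conv_lhs => rw [hxsum]
      rw [Finset.mul_sum, Finset.sum_mul]
    rw [this]
    apply Finset.sum_eq_zero
    intro j hjmem
    by_cases hjz : ((DirectSum.decompose 𝒜 x) j : A) = 0
    · rw [hjz, mul_zero, zero_mul]
    · have hjn : n ≤ j := by
        apply hge_n
        intro hbot
        exact hjz ((Submodule.eq_bot_iff _).mp hbot _ (DirectSum.decompose 𝒜 x j).2)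
      have hmemprod : a * ((DirectSum.decompose 𝒜 x) j : A) * a ∈ 𝒜 (m + j + m) :=
        SetLike.mul_mem_graded
          (SetLike.mul_mem_graded haA (DirectSum.decompose 𝒜 x j).2) haA
      have hbot : 𝒜 (m + j + m) = ⊥ := by
        by_contra hne'
        have := hle_m _ hne'
        omega
      exact (Submodule.eq_bot_iff _).mp hbot _ hmemprod
  · -- d > 0 : m + n < 0, elements of 𝒜 n kill everything
    obtain ⟨a, haA, ha0⟩ := Submodule.exists_mem_ne_zero_of_ne_bot hnS
    apply ha0
    apply stmt13_aux_ss
    intro x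
    have hxsum : x = ∑ j ∈ (DirectSum.decompose 𝒜 x).support,
        ((DirectSum.decompose 𝒜 x) j : A) :=
      (DirectSum.sum_support_decompose 𝒜 x).symm
    have : a * x * a = ∑ j ∈ (DirectSum.decompose 𝒜 x).support,
        a * ((DirectSum.decompose 𝒜 x) j : A) * a := by
      conv_lhs => rw [hxsum]
      rw [Finset.mul_sum, Finset.sum_mul]
    rw [this]
    apply Finset.sum_eq_zero
    intro j hjmem
    by_cases hjz : ((DirectSum.decompose 𝒜 x) j : A) = 0
    · rw [hjz, mul_zero, zero_mul]
    · have hjm : j ≤ m := by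
        apply hle_m
        intro hbot
        exact hjz ((Submodule.eq_bot_iff _).mp hbot _ (DirectSum.decompose 𝒜 x j).2)
      have hmemprod : a * ((DirectSum.decompose 𝒜 x) j : A) * a ∈ 𝒜 (n + j + n) :=
        SetLike.mul_mem_graded
          (SetLike.mul_mem_graded haA (DirectSum.decompose 𝒜 x j).2) haA
      have hbot : 𝒜 (n + j + n) = ⊥ := by
        by_contra hne'
        have := hge_n _ hne'
        omega
      exact (Submodule.eq_bot_iff _).mp hbot _ hmemprod
end

section
/- Let A be a finite dimensional graded symmetric cellular algebra with homogeneous symmetrizing trace. If L_gr(A) = Z_A(A_0), then A is semisimple. -/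
open scoped Classical

section Generic

variable {R : Type} [Ring R]

lemma aux_mem_jacobson_of_nilpotent {l : R} (h : ∀ a : R, IsNilpotent (a * l)) :
    l ∈ Ideal.jacobson (⊥ : Ideal R) := by
  rw [Ideal.jacobson]
  refine Submodule.mem_sInf.mpr ?_
  rintro J ⟨-, hJ⟩
  by_contra hl
  have hlt : J < J ⊔ Ideal.span {l} := by
    refine left_lt_sup.mpr fun hle => hl ?_
    exact hle (Ideal.subset_span rfl)
  have htop : J ⊔ Ideal.span {l} = ⊤ := hJ.out.2 _ hlt
  have h1 : (1 : R) ∈ J ⊔ Ideal.span {l} := htop ▸ trivial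
  obtain ⟨i, hi, z, hz, hiz⟩ := Submodule.mem_sup.mp h1
  obtain ⟨a, rfl⟩ := Submodule.mem_span_singleton.mp hz
  have hiu : IsUnit i := by
    have : i = 1 - a * l := by
      rw [smul_eq_mul] at hiz; exact eq_sub_of_add_eq hiz
    rw [this]
    exact (h a).isUnit_one_sub
  exact hJ.out.1 (Ideal.eq_top_of_isUnit_mem J hi hiu)

lemma aux_jacobson_nilpotent [IsArtinianRing R] :
    ∃ n : ℕ, ∀ L : List R, (∀ x ∈ L, x ∈ Ideal.jacobson (⊥ : Ideal R)) →
      n ≤ L.length → L.prod = 0 := by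
  classical
  set J : Ideal R := Ideal.jacobson ⊥ with hJdef
  let P : ℕ → Ideal R := fun n =>
    Nat.rec ⊤ (fun _ Pn => Submodule.span R {z | ∃ w ∈ Pn, ∃ x ∈ J, z = w * x}) n
  have hPsucc : ∀ n, P (n + 1) ≤ P n := by
    intro n
    induction n with
    | zero => exact le_top
    | succ n ih =>
      refine Submodule.span_le.mpr ?_
      rintro z ⟨w, hw, x, hx, rfl⟩
      exact Submodule.subset_span ⟨w, ih hw, x, hx, rfl⟩
  have hPanti : Antitone P := antitone_nat_of_succ_le hPsucc
  obtain ⟨N, hN⟩ := IsArtinian.monotone_stabilizes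
    (⟨fun n => OrderDual.toDual (P n), fun a b hab => hPanti hab⟩ : ℕ →o (Submodule R R)ᵒᵈ)
  have hstab : P (N + 1) = P N := (hN (N + 1) (Nat.le_succ N)).symm
  have hPbot : P N = ⊥ := by
    by_contra hX
    set Y : Set (Ideal R) := {Y | ∃ w ∈ P N, ∃ y ∈ Y, w * y ≠ 0} with hYdef
    have htopY : (⊤ : Ideal R) ∈ Y := by
      obtain ⟨w, hw, hwne⟩ := Submodule.exists_mem_ne_zero_of_ne_bot hX
      exact ⟨w, hw, 1, trivial, by simpa⟩
    obtain ⟨Y₀, hY₀mem, hY₀min⟩ := IsArtinian.set_has_minimal Y ⟨⊤, htopY⟩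
    obtain ⟨w, hw, y, hy, hwy⟩ := hY₀mem
    set K : Ideal R := Submodule.map (LinearMap.toSpanSingleton R R y) J with hKdef
    have hKY : K ≤ Y₀ := by
      rintro _ ⟨x, hx, rfl⟩
      exact Y₀.smul_mem x hy
    have hKmem : K ∈ Y := by
      by_contra hcon
      have hcon' : ∀ w' ∈ P N, ∀ v ∈ K, w' * v = 0 := by
        intro w' hw' v hv
        by_contra hne
        exact hcon ⟨w', hw', v, hv, hne⟩
      have hz : ∀ u ∈ P (N + 1), u * y = 0 := by
        intro u hu
        refine Submodule.span_induction ?_ ?_ ?_ ?_ hu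
        · rintro z ⟨w', hw', x, hx, rfl⟩
          rw [mul_assoc]
          exact hcon' w' hw' (x * y) ⟨x, hx, rfl⟩
        · exact zero_mul y
        · intro a b _ _ ha hb; rw [add_mul, ha, hb, add_zero]
        · intro a x _ hx'; rw [smul_eq_mul, mul_assoc, hx', mul_zero]
      exact hwy (hz w (hstab ▸ hw))
    have hKeq : K = Y₀ := hKY.lt_or_eq.resolve_left (hY₀min K hKmem)
    obtain ⟨j, hj, hjy⟩ := hKeq ▸ hy
    have hjy' : j * y = y := hjy
    have hspan : Ideal.span {(1 : R) - j} = ⊤ := by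
      by_contra hne
      obtain ⟨m, hm, hle⟩ := Ideal.exists_le_maximal _ hne
      have h1m : (1 : R) - j ∈ m := hle (Ideal.subset_span rfl)
      have hjm : j ∈ m := by
        have hJm : J ≤ m := sInf_le ⟨bot_le, hm⟩
        exact hJm hj
      have : (1 : R) ∈ m := by simpa using m.add_mem h1m hjm
      exact hm.ne_top (m.eq_top_of_isUnit_mem this isUnit_one)
    obtain ⟨u, hu⟩ : ∃ u : R, u * (1 - j) = 1 := by
      have h1 : (1 : R) ∈ Ideal.span {(1 : R) - j} := hspan ▸ trivial
      obtain ⟨a, ha⟩ := Submodule.mem_span_singleton.mp h1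
      exact ⟨a, ha⟩
    have hy0 : y = 0 := by
      have h0 : (1 - j) * y = 0 := by rw [sub_mul, one_mul, hjy', sub_self]
      calc y = u * (1 - j) * y := by rw [hu, one_mul]
      _ = u * ((1 - j) * y) := mul_assoc _ _ _
      _ = 0 := by rw [h0, mul_zero]
    exact hwy (by rw [hy0, mul_zero])
  refine ⟨N, fun L hL hlen => ?_⟩
  have hprodmem : ∀ L : List R, (∀ x ∈ L, x ∈ J) → L.prod ∈ P L.length := by
    intro L
    induction L using List.reverseRecOn with
    | nil => intro _; exact Submodule.mem_top
    | append_singleton L x ih =>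
      intro h
      rw [List.prod_append, List.prod_singleton]
      have h1 : (L ++ [x]).length = L.length + 1 := by simp
      rw [h1]
      refine Submodule.subset_span ⟨L.prod, ih fun z hz => h z (List.mem_append_left _ hz),
        x, h x (List.mem_append_right _ (List.mem_singleton_self x)), rfl⟩
  have := hprodmem L hL
  have hle : P L.length ≤ P N := hPanti hlen
  have : L.prod ∈ (⊥ : Ideal R) := hPbot ▸ hle this
  simpa using this

lemma aux_semisimple_of_jacobson_bot [IsArtinianRing R]
    (h : Ideal.jacobson (⊥ : Ideal R) = ⊥) : IsSemisimpleRing R := by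
  classical
  set S : Set (Ideal R) := {X | ∃ s : Finset (Ideal R), (∀ m ∈ s, m.IsMaximal) ∧ X = s.inf id}
    with hSdef
  obtain ⟨X, hXmem, hmin⟩ := IsArtinian.set_has_minimal S ⟨⊤, ∅, by simp, by simp⟩
  obtain ⟨s, hs, rfl⟩ := hXmem
  have hbot : s.inf id = ⊥ := by
    have hle : ∀ m : Ideal R, m.IsMaximal → s.inf id ≤ m := by
      intro m hm
      have hmem : s.inf id ⊓ m ∈ S := by
        refine ⟨insert m s, ?_, ?_⟩
        · intro m' hm'
          rcases Finset.mem_insert.mp hm' with rfl | hm'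
          · exact hm
          · exact hs m' hm'
        · rw [Finset.inf_insert, inf_comm]; rfl
      have hnotlt := hmin _ hmem
      have heq : s.inf id ⊓ m = s.inf id :=
        (inf_le_left.lt_or_eq.resolve_left hnotlt)
      exact inf_eq_left.mp heq
    have hj : s.inf id ≤ Ideal.jacobson (⊥ : Ideal R) := by
      rw [Ideal.jacobson]
      exact le_sInf (by rintro m ⟨-, hm⟩; exact hle m hm)
    exact le_bot_iff.mp (h ▸ hj)
  haveI hsimple : ∀ i : s, IsSimpleModule R (R ⧸ (i : Ideal R)) := fun i =>
    isSimpleModule_iff_isCoatom.mpr (hs i i.2).out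
  let f : R →ₗ[R] (∀ i : s, R ⧸ (i : Ideal R)) := LinearMap.pi fun i => ((i : Ideal R)).mkQ
  have hker : LinearMap.ker f = ⊥ := by
    rw [LinearMap.ker_pi]
    simp only [Submodule.ker_mkQ]
    refine le_bot_iff.mp ?_
    rw [← hbot]
    exact Finset.le_inf fun b hb => iInf_le (fun i : s => (i : Ideal R)) ⟨b, hb⟩
  haveI hpi : IsSemisimpleModule R (∀ i : s, R ⧸ (i : Ideal R)) := by
    refine isSemisimpleModule_of_isSemisimpleModule_submodule'
      (p := fun i => LinearMap.range (LinearMap.single R _ i)) (fun i => ?_) ?_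
    · have hinj : Function.Injective (LinearMap.single R (fun i : s => R ⧸ (i : Ideal R)) i) :=
        fun a b hab => by simpa using congrFun hab i
      exact IsSemisimpleModule.congr (LinearEquiv.ofInjective _ hinj).symm
    · simp_rw [LinearMap.range_eq_map, Submodule.iSup_map_single, Submodule.pi_top]
  haveI : IsSemisimpleModule R ↥(LinearMap.range f) := IsSemisimpleModule.submodule R _
  exact IsSemisimpleModule.congr (N := R) (M := ↥(LinearMap.range f))
    (LinearEquiv.ofInjective f (LinearMap.ker_eq_bot.mp hker))

end Generic

/-- Lemma 5.6: if `L_gr(A) = Z_A(A₀)` then `A` is semisimple. -/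
theorem stmt15
    {K A : Type} [Field K] [Ring A] [Algebra K A] [FiniteDimensional K A]
    {Λ : Type} [PartialOrder Λ] [Fintype Λ]
    {M : Λ → Type} [∀ l : Λ, Fintype (M l)]
    (C : ∀ l : Λ, M l → M l → A)
    (bas : Module.Basis (Σ l : Λ, M l × M l) K A)
    (hbas : ∀ (l : Λ) (S T : M l), bas ⟨l, (S, T)⟩ = C l S T)
    (star : A →ₗ[K] A)
    (hstar : ∀ a b : A, star (a * b) = star b * star a)
    (hstarC : ∀ (l : Λ) (S T : M l), star (C l S T) = C l T S)
    (hcell : ∀ (a : A) (l : Λ), ∃ r : M l → M l → K, ∀ S T : M l,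
      a * C l S T - ∑ S' : M l, r S' S • C l S' T ∈
        Submodule.span K {x : A | ∃ μ : Λ, μ < l ∧ ∃ U V : M μ, x = C μ U V})

    (τ : A →ₗ[K] K)
    (hτsym : ∀ a b : A, τ (a * b) = τ (b * a))
    (hτnd : ∀ a : A, a ≠ 0 → ∃ b : A, τ (a * b) ≠ 0)
    (D : ∀ l : Λ, M l → M l → A)
    (hdual : ∀ (l μ : Λ) (S T : M l) (U V : M μ),
      τ (C l S T * D μ U V) =
        if (⟨l, (S, T)⟩ : Σ l : Λ, M l × M l) = ⟨μ, (V, U)⟩ then 1 else 0)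
    (𝒜 : ℤ → Submodule K A) [GradedAlgebra 𝒜]
    (deg : ∀ l : Λ, M l → ℤ)
    (hhom : ∀ (l : Λ) (S T : M l), C l S T ∈ 𝒜 (deg l S + deg l T))
    (d : ℤ)
    (hτhom : ∀ i : ℤ, i ≠ -d → ∀ a ∈ 𝒜 i, τ a = 0)
    (e : ∀ _ : Λ, ℤ → A)
    (he : ∀ (l : Λ) (c : ℤ),
      e l c = ∑ S ∈ Finset.univ.filter (fun S : M l => deg l S = c), C l S S * D l S S)
    (hL : Submodule.span K {z : A | ∃ (l : Λ) (c : ℤ), z = e l c} =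
      Subalgebra.toSubmodule (Subalgebra.centralizer K (𝒜 0 : Set A))) :
    IsSemisimpleRing A := by
  classical
  haveI hart : IsArtinianRing A := IsArtinianRing.of_finite K A
  set J : Ideal A := Ideal.jacobson ⊥ with hJdef
  obtain ⟨n₀, hn₀⟩ := aux_jacobson_nilpotent (R := A)
  -- the span of lower cells
  set Low : Λ → Submodule K A := fun l =>
    Submodule.span K {x : A | ∃ μ : Λ, μ < l ∧ ∃ U V : M μ, x = C μ U V} with hLowdef
  -- structure constants of the left action on cell modules
  set r : A → ∀ l : Λ, M l → M l → K := fun a l => Classical.choose (hcell a l) with hrdef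
  have hr : ∀ (a : A) (l : Λ) (S T : M l),
      a * C l S T - ∑ S' : M l, r a l S' S • C l S' T ∈ Low l :=
    fun a l => Classical.choose_spec (hcell a l)
  -- elements of `Low l` have no level-`l` coordinates
  have low_repr : ∀ (l : Λ) (w : A), w ∈ Low l → ∀ P Q : M l,
      bas.repr w ⟨l, (P, Q)⟩ = 0 := by
    intro l w hw P Q
    refine Submodule.span_induction ?_ ?_ ?_ ?_ hw
    · rintro x ⟨μ, hμ, U, V, rfl⟩
      rw [← hbas, bas.repr_self]
      exact Finsupp.single_eq_of_ne' (fun h => (ne_of_lt hμ) (congrArg Sigma.fst h))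
    · simp
    · intro u v _ _ hu hv; rw [map_add, Finsupp.add_apply, hu, hv, add_zero]
    · intro a u _ hu; rw [map_smul, Finsupp.smul_apply, hu, smul_zero]
  have low_tau : ∀ (l : Λ) (S T : M l) (w : A), w ∈ Low l → τ (w * D l S T) = 0 := by
    intro l S T w hw
    refine Submodule.span_induction ?_ ?_ ?_ ?_ hw
    · rintro x ⟨μ, hμ, U, V, rfl⟩
      rw [hdual]
      exact if_neg (fun h => (ne_of_lt hμ) (congrArg Sigma.fst h))
    · simp
    · intro u v _ _ hu hv; rw [add_mul, map_add, hu, hv, add_zero]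
    · intro a u _ hu; rw [smul_mul_assoc, map_smul, hu, smul_zero]
  have low_mono : ∀ {μ l : Λ}, μ < l → Low μ ≤ Low l := by
    intro μ l hμ
    refine Submodule.span_mono ?_
    rintro x ⟨ξ, hξ, U, V, rfl⟩
    exact ⟨ξ, lt_trans hξ hμ, U, V, rfl⟩
  have low_mul : ∀ (l : Λ) (a : A) (w : A), w ∈ Low l → a * w ∈ Low l := by
    intro l a w hw
    refine Submodule.span_induction ?_ ?_ ?_ ?_ hw
    · rintro x ⟨μ, hμ, U, V, rfl⟩
      have h2 : a * C μ U V = (∑ S' : M μ, r a μ S' U • C μ S' V) +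
          (a * C μ U V - ∑ S' : M μ, r a μ S' U • C μ S' V) := by abel
      rw [h2]
      refine Submodule.add_mem _ ?_ (low_mono hμ (hr a μ U V))
      refine Submodule.sum_mem _ fun S' _ => Submodule.smul_mem _ _ ?_
      exact Submodule.subset_span ⟨μ, hμ, S', V, rfl⟩
    · rw [mul_zero]; exact Submodule.zero_mem _
    · intro u v _ _ hu hv; rw [mul_add]; exact Submodule.add_mem _ hu hv
    · intro c u _ hu; rw [mul_smul_comm]; exact Submodule.smul_mem _ _ hu
  -- the structure constants are basis coordinates
  have repr_r : ∀ (a : A) (l : Λ) (S T S' : M l),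
      bas.repr (a * C l S T) ⟨l, (S', T)⟩ = r a l S' S := by
    intro a l S T S'
    have h2 : a * C l S T = (∑ S'' : M l, r a l S'' S • C l S'' T) +
        (a * C l S T - ∑ S'' : M l, r a l S'' S • C l S'' T) := by abel
    rw [h2, map_add, Finsupp.add_apply, low_repr l _ (hr a l S T) S' T, add_zero]
    have hterm : ∀ S'' : M l, bas.repr (r a l S'' S • C l S'' T) ⟨l, (S', T)⟩
        = if S'' = S' then r a l S'' S else 0 := by
      intro S''
      rw [map_smul, Finsupp.smul_apply, ← hbas, bas.repr_self, Finsupp.single_apply]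
      by_cases h : S'' = S'
      · subst h; simp
      · rw [if_neg, if_neg h, smul_zero]
        intro hcon
        exact h (Prod.mk_inj.mp (eq_of_heq (Sigma.mk.inj_iff.mp hcon).2)).1
    rw [map_sum, Finsupp.finset_sum_apply]
    simp only [hterm]
    rw [Finset.sum_ite_eq' Finset.univ S' (fun S'' => r a l S'' S)]
    simp
  have r_zero : ∀ (l : Λ) (S S' : M l), r (0 : A) l S' S = 0 := by
    intro l S S'
    rw [← repr_r 0 l S S S', zero_mul, map_zero]
    rfl
  have r_add : ∀ (a b : A) (l : Λ) (S S' : M l),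
      r (a + b) l S' S = r a l S' S + r b l S' S := by
    intro a b l S S'
    rw [← repr_r a l S S S', ← repr_r b l S S S', ← repr_r (a + b) l S S S',
      add_mul, map_add, Finsupp.add_apply]
  have r_mul : ∀ (a b : A) (l : Λ) (S' S : M l),
      r (a * b) l S' S = ∑ S'' : M l, r a l S' S'' * r b l S'' S := by
    intro a b l S' S
    have h2 : b * C l S S = (∑ S'' : M l, r b l S'' S • C l S'' S) +
        (b * C l S S - ∑ S'' : M l, r b l S'' S • C l S'' S) := by abel
    have h3 : a * (b * C l S S) = (∑ S'' : M l, r b l S'' S • (a * C l S'' S)) +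
        a * (b * C l S S - ∑ S'' : M l, r b l S'' S • C l S'' S) := by
      conv_lhs => rw [h2]
      rw [mul_add, Finset.mul_sum]
      simp_rw [mul_smul_comm]
    calc r (a * b) l S' S = bas.repr ((a * b) * C l S S) ⟨l, (S', S)⟩ :=
          (repr_r (a * b) l S S S').symm
    _ = bas.repr (a * (b * C l S S)) ⟨l, (S', S)⟩ := by rw [mul_assoc]
    _ = ∑ S'' : M l, r b l S'' S * r a l S' S'' := by
        rw [h3, map_add, Finsupp.add_apply,
          low_repr l _ (low_mul l a _ (hr b l S S)) S' S, add_zero, map_sum,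
          Finsupp.finset_sum_apply]
        refine Finset.sum_congr rfl fun S'' _ => ?_
        rw [map_smul, Finsupp.smul_apply, repr_r a l S'' S S', smul_eq_mul]
    _ = ∑ S'' : M l, r a l S' S'' * r b l S'' S := by
        refine Finset.sum_congr rfl fun S'' _ => mul_comm _ _
  -- the key trace formula
  have tau_CD : ∀ (a : A) (l : Λ) (S : M l),
      τ (a * (C l S S * D l S S)) = r a l S S := by
    intro a l S
    rw [← mul_assoc]
    have h2 : a * C l S S = (∑ S'' : M l, r a l S'' S • C l S'' S) +
        (a * C l S S - ∑ S'' : M l, r a l S'' S • C l S'' S) := by abel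
    rw [h2, add_mul, map_add, low_tau l S S _ (hr a l S S), add_zero,
      Finset.sum_mul, map_sum]
    have hterm : ∀ S'' : M l, τ ((r a l S'' S • C l S'' S) * D l S S)
        = if S'' = S then r a l S'' S else 0 := by
      intro S''
      rw [smul_mul_assoc, map_smul, hdual, smul_eq_mul]
      by_cases h : S'' = S
      · subst h; simp
      · rw [if_neg, mul_zero, if_neg h]
        intro hcon
        exact h (Prod.mk_inj.mp (eq_of_heq (Sigma.mk.inj_iff.mp hcon).2)).1
    simp only [hterm]
    rw [Finset.sum_ite_eq' Finset.univ S (fun S'' => r a l S'' S)]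
    simp
  -- homogeneous components
  set π : ℤ → A →ₗ[K] A := fun i => (𝒜 i).subtype ∘ₗ
    (DFinsupp.lapply i) ∘ₗ (DirectSum.decomposeLinearEquiv 𝒜).toLinearMap with hπdef
  have pi_apply : ∀ (i : ℤ) (a : A), π i a = ((DirectSum.decompose 𝒜 a) i : A) := by
    intro i a; rfl
  have pi_mem : ∀ (i : ℤ) (a : A), π i a ∈ 𝒜 i := by
    intro i a; rw [pi_apply]; exact Submodule.coe_mem _
  have pi_same : ∀ (i : ℤ) (a : A), a ∈ 𝒜 i → π i a = a := by
    intro i a ha; rw [pi_apply]; exact DirectSum.decompose_of_mem_same 𝒜 ha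
  have pi_ne : ∀ (i j : ℤ) (a : A), a ∈ 𝒜 j → j ≠ i → π i a = 0 := by
    intro i j a ha hne; rw [pi_apply]; exact DirectSum.decompose_of_mem_ne 𝒜 ha hne
  set degidx : (Σ l : Λ, M l × M l) → ℤ := fun b => deg b.1 b.2.1 + deg b.1 b.2.2
    with hdegidxdef
  set Dset : Finset ℤ := Finset.image degidx Finset.univ with hDsetdef
  have hbasdeg : ∀ b, bas b ∈ 𝒜 (degidx b) := by
    rintro ⟨l, S, T⟩; rw [hbas]; exact hhom l S T
  have pi_bas : ∀ (i : ℤ) b, π i (bas b) = if degidx b = i then bas b else 0 := by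
    intro i b
    by_cases h : degidx b = i
    · rw [if_pos h, pi_same i _ (h ▸ hbasdeg b)]
    · rw [if_neg h]; exact pi_ne i _ _ (hbasdeg b) h
  have pi_expand : ∀ (i : ℤ) (a : A),
      π i a = ∑ b : (Σ l : Λ, M l × M l), bas.repr a b • π i (bas b) := by
    intro i a
    conv_lhs => rw [← bas.sum_repr a]
    rw [map_sum]
    simp_rw [map_smul]
  have sum_pi : ∀ a : A, ∑ i ∈ Dset, π i a = a := by
    intro a
    calc ∑ i ∈ Dset, π i a
        = ∑ i ∈ Dset, ∑ b : (Σ l : Λ, M l × M l), bas.repr a b • π i (bas b) := by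
          refine Finset.sum_congr rfl fun i _ => pi_expand i a
    _ = ∑ b : (Σ l : Λ, M l × M l), ∑ i ∈ Dset, bas.repr a b • π i (bas b) :=
          Finset.sum_comm
    _ = ∑ b : (Σ l : Λ, M l × M l), bas.repr a b • bas b := by
          refine Finset.sum_congr rfl fun b _ => ?_
          rw [← Finset.smul_sum]
          congr 1
          simp_rw [pi_bas]
          rw [Finset.sum_ite_eq Dset (degidx b) (fun _ => bas b)]
          exact if_pos (Finset.mem_image.mpr ⟨b, Finset.mem_univ b, rfl⟩)
    _ = a := bas.sum_repr a
  have pi_notin : ∀ (i : ℤ) (a : A), i ∉ Dset → π i a = 0 := by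
    intro i a hi
    rw [pi_expand i a]
    refine Finset.sum_eq_zero fun b _ => ?_
    rw [pi_bas, if_neg (fun h => hi (Finset.mem_image.mpr ⟨b, Finset.mem_univ b, h⟩)),
      smul_zero]
  have repr_homog : ∀ (j : ℤ) (v : A), v ∈ 𝒜 j → ∀ b, degidx b ≠ j → bas.repr v b = 0 := by
    intro j v hv b hb
    have h1 : v = ∑ b' ∈ Finset.univ.filter (fun b' => degidx b' = j),
        bas.repr v b' • bas b' := by
      conv_lhs => rw [← pi_same j v hv, pi_expand j v]
      rw [Finset.sum_filter]
      refine Finset.sum_congr rfl fun b' _ => ?_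
      rw [pi_bas]
      by_cases h : degidx b' = j
      · rw [if_pos h, if_pos h]
      · rw [if_neg h, if_neg h, smul_zero]
    have h2 : bas.repr v b = ∑ b' ∈ Finset.univ.filter (fun b' => degidx b' = j),
        bas.repr v b' • bas.repr (bas b') b := by
      conv_lhs => rw [h1]
      rw [map_sum, Finsupp.finset_sum_apply]
      refine Finset.sum_congr rfl fun b' _ => ?_
      rw [map_smul, Finsupp.smul_apply]
    rw [h2]
    refine Finset.sum_eq_zero fun b' hb' => ?_
    rw [bas.repr_self, Finsupp.single_apply, if_neg, smul_zero]
    intro hcon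
    exact hb (hcon ▸ (Finset.mem_filter.mp hb').2)
  have hblock : ∀ (i : ℤ) (a : A), a ∈ 𝒜 i → ∀ (l : Λ) (S' S : M l),
      deg l S' ≠ deg l S + i → r a l S' S = 0 := by
    intro i a ha l S' S hne
    rw [← repr_r a l S S S']
    refine repr_homog (i + (deg l S + deg l S)) _ (SetLike.mul_mem_graded ha (hhom l S S))
      ⟨l, (S', S)⟩ ?_
    show deg l S' + deg l S ≠ i + (deg l S + deg l S)
    omega
  -- components of products
  have pi_mul : ∀ (u v : A) (Pu Qv : ℤ), (∀ p, Pu < p → π p u = 0) →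
      (∀ q, Qv < q → π q v = 0) →
      (∀ j, Pu + Qv < j → π j (u * v) = 0) ∧
        π (Pu + Qv) (u * v) = π Pu u * π Qv v := by
    intro u v Pu Qv hu hv
    have hexp : ∀ j, π j (u * v) =
        ∑ pq ∈ Dset ×ˢ Dset, if pq.1 + pq.2 = j then π pq.1 u * π pq.2 v else 0 := by
      intro j
      have huv : u * v = ∑ pq ∈ Dset ×ˢ Dset, π pq.1 u * π pq.2 v := by
        conv_lhs => rw [← sum_pi u, ← sum_pi v]
        rw [Finset.sum_mul_sum, ← Finset.sum_product']
      rw [huv, map_sum]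
      refine Finset.sum_congr rfl fun pq _ => ?_
      by_cases h : pq.1 + pq.2 = j
      · rw [if_pos h, pi_same j _ (h ▸ SetLike.mul_mem_graded (pi_mem pq.1 u) (pi_mem pq.2 v))]
      · rw [if_neg h]
        exact pi_ne j _ _ (SetLike.mul_mem_graded (pi_mem pq.1 u) (pi_mem pq.2 v)) h
    constructor
    · intro j hj
      rw [hexp j]
      refine Finset.sum_eq_zero fun pq _ => ?_
      by_cases h : pq.1 + pq.2 = j
      · rw [if_pos h]
        rcases lt_or_ge Pu pq.1 with h' | h'
        · rw [hu pq.1 h', zero_mul]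
        · have : Qv < pq.2 := by omega
          rw [hv pq.2 this, mul_zero]
      · rw [if_neg h]
    · rw [hexp]
      rcases em (Pu ∈ Dset ∧ Qv ∈ Dset) with ⟨hP, hQ⟩ | hPQ
      · rw [Finset.sum_eq_single_of_mem (Pu, Qv) (Finset.mem_product.mpr ⟨hP, hQ⟩)]
        · rw [if_pos rfl]
        · rintro ⟨p, q⟩ hmem hne
          by_cases h : p + q = Pu + Qv
          · rw [if_pos h]
            rcases lt_trichotomy p Pu with h' | h' | h'
            · have : Qv < q := by omega
              rw [hv q this, mul_zero]
            · exfalso; apply hne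
              have : q = Qv := by omega
              rw [h', this]
            · rw [hu p h', zero_mul]
          · rw [if_neg h]
      · have hz : π Pu u * π Qv v = 0 := by
          rcases not_and_or.mp hPQ with h | h
          · rw [pi_notin Pu u h, zero_mul]
          · rw [pi_notin Qv v h, mul_zero]
        rw [hz]
        refine Finset.sum_eq_zero fun pq hmem => ?_
        by_cases h : pq.1 + pq.2 = Pu + Qv
        · rw [if_pos h]
          rcases lt_trichotomy pq.1 Pu with h' | h' | h'
          · have : Qv < pq.2 := by omega
            rw [hv pq.2 this, mul_zero]
          · exfalso
            apply hPQ
            obtain ⟨h1, h2⟩ := Finset.mem_product.mp hmem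
            refine ⟨h' ▸ h1, ?_⟩
            have : pq.2 = Qv := by omega
            exact this ▸ h2
          · rw [hu pq.1 h', zero_mul]
        · rw [if_neg h]
  -- Bergman: the top homogeneous component of a radical element is radical
  have lead_mem : ∀ (x : A), x ∈ J → ∀ mt : ℤ, (∀ p, mt < p → π p x = 0) →
      π mt x ∈ J := by
    intro x hxJ mt htop
    set l := π mt x with hldef
    have hword : ∀ L : List (ℤ × A), (∀ p ∈ L, p.2 ∈ 𝒜 p.1) →
        (∀ j, (L.map Prod.fst).sum + (L.length : ℤ) * mt < j →
          π j ((L.map (fun p => p.2 * x)).prod) = 0) ∧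
        π ((L.map Prod.fst).sum + (L.length : ℤ) * mt)
            ((L.map (fun p => p.2 * x)).prod)
          = (L.map (fun p => p.2 * l)).prod := by
      intro L
      induction L with
      | nil =>
        intro _
        constructor
        · intro j hj
          simp only [List.map_nil, List.prod_nil, List.sum_nil, List.length_nil] at hj ⊢
          refine pi_ne j 0 1 (SetLike.one_mem_graded 𝒜) ?_
          omega
        · simp only [List.map_nil, List.prod_nil, List.sum_nil, List.length_nil]
          norm_num
          exact pi_same 0 1 (SetLike.one_mem_graded 𝒜)
      | cons p L ih =>
        intro hL
        have hp : p.2 ∈ 𝒜 p.1 := hL p (List.mem_cons_self (a := p) (l := L))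
        have ihL := ih (fun q hq => hL q (List.mem_cons_of_mem _ hq))
        have hax : (∀ j, p.1 + mt < j → π j (p.2 * x) = 0) ∧
            π (p.1 + mt) (p.2 * x) = p.2 * l := by
          have h1 : ∀ j, p.1 < j → π j p.2 = 0 := fun j hj =>
            pi_ne j p.1 p.2 hp (by omega)
          have h2 := pi_mul p.2 x p.1 mt h1 htop
          exact ⟨h2.1, by rw [h2.2, pi_same p.1 p.2 hp]⟩
        have hcomb := pi_mul (p.2 * x) ((L.map (fun q => q.2 * x)).prod)
          (p.1 + mt) ((L.map Prod.fst).sum + (L.length : ℤ) * mt) hax.1 ihL.1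
        have harith : ((p :: L).map Prod.fst).sum + ((p :: L).length : ℤ) * mt
            = (p.1 + mt) + ((L.map Prod.fst).sum + (L.length : ℤ) * mt) := by
          rw [List.map_cons, List.sum_cons, List.length_cons]
          push_cast
          ring
        constructor
        · intro j hj
          simp only [List.map_cons, List.prod_cons]
          refine hcomb.1 j ?_
          rw [harith] at hj
          exact hj
        · rw [harith]
          simp only [List.map_cons, List.prod_cons]
          rw [hcomb.2, hax.2, ihL.2]
    have hword0 : ∀ L : List (ℤ × A), (∀ p ∈ L, p.2 ∈ 𝒜 p.1) → L.length = n₀ →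
        (L.map (fun p => p.2 * l)).prod = 0 := by
      intro L hL hlen
      have h0 : (L.map (fun p => p.2 * x)).prod = 0 := by
        refine hn₀ _ ?_ ?_
        · intro z hz
          obtain ⟨p, hp, rfl⟩ := List.mem_map.mp hz
          exact J.smul_mem p.2 hxJ
        · rw [List.length_map, hlen]
      rw [← (hword L hL).2, h0, map_zero]
    have hnil : ∀ a : A, (a * l) ^ n₀ = 0 := by
      intro a
      have hWs : ∀ n : ℕ, (a * l) ^ n ∈ Submodule.span K
          {w : A | ∃ L : List (ℤ × A), (∀ p ∈ L, p.2 ∈ 𝒜 p.1) ∧ L.length = n ∧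
            w = (L.map (fun p => p.2 * l)).prod} := by
        intro n
        induction n with
        | zero =>
          rw [pow_zero]
          exact Submodule.subset_span ⟨[], by simp, by simp, by simp⟩
        | succ n ihn =>
          rw [pow_succ]
          refine Submodule.span_induction ?_ ?_ ?_ ?_ ihn
          · rintro w ⟨L, hLhom, hlen, rfl⟩
            have hsplit : (L.map (fun p => p.2 * l)).prod * (a * l)
                = ∑ k ∈ Dset, ((L ++ [(k, π k a)]).map (fun p => p.2 * l)).prod := by
              have h1 : ∀ k : ℤ, ((L ++ [(k, π k a)]).map (fun p => p.2 * l)).prod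
                  = (L.map (fun p => p.2 * l)).prod * (π k a * l) := by
                intro k
                rw [List.map_append, List.prod_append, List.map_singleton,
                  List.prod_singleton]
              simp_rw [h1]
              conv_lhs => rw [← sum_pi a]
              rw [Finset.sum_mul, Finset.mul_sum]
            rw [hsplit]
            refine Submodule.sum_mem _ fun k _ => Submodule.subset_span
              ⟨L ++ [(k, π k a)], ?_, by simp [hlen], rfl⟩
            intro q hq
            rcases List.mem_append.mp hq with h | h
            · exact hLhom q h
            · rw [List.mem_singleton] at h
              rw [h]
              exact pi_mem k a
          · rw [zero_mul]; exact Submodule.zero_mem _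
          · intro u v _ _ hu hv; rw [add_mul]; exact Submodule.add_mem _ hu hv
          · intro c u _ hu; rw [smul_mul_assoc]; exact Submodule.smul_mem _ _ hu
      have h1 := hWs n₀
      have h2 : {w : A | ∃ L : List (ℤ × A), (∀ p ∈ L, p.2 ∈ 𝒜 p.1) ∧ L.length = n₀ ∧
          w = (L.map (fun p => p.2 * l)).prod} ⊆ {(0 : A)} := by
        rintro w ⟨L, hLhom, hlen, rfl⟩
        exact Set.mem_singleton_iff.mpr (hword0 L hLhom hlen)
      have h3 := Submodule.span_mono h2 h1
      rwa [Submodule.span_singleton_eq_bot.mpr rfl, Submodule.mem_bot] at h3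
    exact aux_mem_jacobson_of_nilpotent (fun a => ⟨n₀, hnil a⟩)
  -- Bergman: all homogeneous components of radical elements are radical
  have berg : ∀ (n : ℕ) (x : A), x ∈ J → (Dset.filter (fun i => π i x ≠ 0)).card ≤ n →
      ∀ i, π i x ∈ J := by
    intro n
    induction n with
    | zero =>
      intro x hx hcard i
      have hempty : Dset.filter (fun i => π i x ≠ 0) = ∅ :=
        Finset.card_eq_zero.mp (Nat.le_zero.mp hcard)
      by_cases hi : i ∈ Dset
      · by_cases h : π i x = 0
        · rw [h]; exact J.zero_mem
        · exact absurd (hempty ▸ Finset.mem_filter.mpr ⟨hi, h⟩) (Finset.notMem_empty i)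
      · rw [pi_notin i x hi]; exact J.zero_mem
    | succ n ihn =>
      intro x hx hcard i
      set spt := Dset.filter (fun i => π i x ≠ 0) with hsptdef
      rcases Finset.eq_empty_or_nonempty spt with hem | hne
      · by_cases hi : i ∈ Dset
        · by_cases h : π i x = 0
          · rw [h]; exact J.zero_mem
          · exact absurd (hem ▸ Finset.mem_filter.mpr ⟨hi, h⟩) (Finset.notMem_empty i)
        · rw [pi_notin i x hi]; exact J.zero_mem
      · set mt := spt.max' hne with hmtdef
        have htop : ∀ p, mt < p → π p x = 0 := by
          intro p hp
          by_cases hpD : p ∈ Dset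
          · by_cases h : π p x = 0
            · exact h
            · exact absurd (Finset.le_max' spt p (Finset.mem_filter.mpr ⟨hpD, h⟩))
                (not_le.mpr hp)
          · exact pi_notin p x hpD
        have hlJ : π mt x ∈ J := lead_mem x hx mt htop
        have hx'J : x - π mt x ∈ J := J.sub_mem hx hlJ
        have hpx' : ∀ i', π i' (x - π mt x) = if i' = mt then 0 else π i' x := by
          intro i'
          rw [map_sub]
          by_cases h : i' = mt
          · rw [if_pos h, h, pi_same mt _ (pi_mem mt x), sub_self]
          · rw [if_neg h, pi_ne i' mt _ (pi_mem mt x) (fun hcon => h hcon.symm), sub_zero]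
        have hcard' : (Dset.filter (fun i' => π i' (x - π mt x) ≠ 0)).card ≤ n := by
          have hsub : Dset.filter (fun i' => π i' (x - π mt x) ≠ 0) ⊆ spt.erase mt := by
            intro i' hi'
            obtain ⟨hiD, hne0⟩ := Finset.mem_filter.mp hi'
            rw [hpx'] at hne0
            by_cases h : i' = mt
            · rw [if_pos h] at hne0; exact absurd rfl hne0
            · rw [if_neg h] at hne0
              exact Finset.mem_erase.mpr ⟨h, Finset.mem_filter.mpr ⟨hiD, hne0⟩⟩
          have h1 : (Dset.filter (fun i' => π i' (x - π mt x) ≠ 0)).card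
              ≤ (spt.erase mt).card := Finset.card_le_card hsub
          have h2 : (spt.erase mt).card = spt.card - 1 :=
            Finset.card_erase_of_mem (spt.max'_mem hne)
          have h3 : spt.card ≤ n + 1 := hcard
          have h4 : 1 ≤ spt.card := Finset.card_pos.mpr hne
          omega
        have hres := ihn (x - π mt x) hx'J hcard'
        by_cases h : i = mt
        · rw [h]; exact hlJ
        · have h5 := hres i
          rw [hpx' i, if_neg h] at h5
          exact h5
  -- τ vanishes on the radical
  have r_sum : ∀ (s : Finset ℤ) (g : ℤ → A) (l : Λ) (S S' : M l),
      r (∑ i ∈ s, g i) l S' S = ∑ i ∈ s, r (g i) l S' S := by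
    intro s g l S S'
    induction s using Finset.induction_on with
    | empty => rw [Finset.sum_empty, Finset.sum_empty, r_zero]
    | insert _ _ hnem ih => rw [Finset.sum_insert hnem, Finset.sum_insert hnem, r_add, ih]
  have tauJ : ∀ x ∈ J, τ x = 0 := by
    intro x hxJ
    have h1mem : (1 : A) ∈ Submodule.span K {z : A | ∃ (l : Λ) (c : ℤ), z = e l c} := by
      rw [hL]
      exact (Subalgebra.mem_toSubmodule _).mpr (one_mem _)
    -- data about the degree-zero component of x
    set x0 := π 0 x with hx0def
    have hx0J : x0 ∈ J := berg _ x hxJ le_rfl 0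
    have hx0mem : x0 ∈ 𝒜 0 := pi_mem 0 x
    have hrx : ∀ (l : Λ) (S : M l), r x l S S = r x0 l S S := by
      intro l S
      have h1 : r x l S S = ∑ i ∈ Dset, r (π i x) l S S := by
        conv_lhs => rw [← sum_pi x]
        exact r_sum Dset (fun i => π i x) l S S
      rw [h1]
      by_cases h0 : (0 : ℤ) ∈ Dset
      · rw [Finset.sum_eq_single_of_mem 0 h0]
        intro i _ hine
        exact hblock i (π i x) (pi_mem i x) l S S (by omega)
      · have hz : ∀ i ∈ Dset, r (π i x) l S S = 0 := by
          intro i hi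
          have hine : i ≠ 0 := fun hc => h0 (hc ▸ hi)
          exact hblock i (π i x) (pi_mem i x) l S S (by omega)
        rw [Finset.sum_eq_zero hz, hx0def, pi_notin 0 x h0, r_zero]
    have hx0n : x0 ^ (n₀ + 1) = 0 := by
      have h1 : x0 ^ n₀ = 0 := by
        have h2 := hn₀ (List.replicate n₀ x0)
          (fun z hz => by rw [List.eq_of_mem_replicate hz]; exact hx0J) (by simp)
        rwa [List.prod_replicate] at h2
      rw [pow_succ, h1, zero_mul]
    have key : ∀ z ∈ Submodule.span K {z : A | ∃ (l : Λ) (c : ℤ), z = e l c},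
        τ (x * z) = 0 := by
      intro z hz
      refine Submodule.span_induction ?_ ?_ ?_ ?_ hz
      · rintro z ⟨l, c, rfl⟩
        rw [he l c, Finset.mul_sum, map_sum]
        have hstep : ∀ S ∈ Finset.univ.filter (fun S : M l => deg l S = c),
            τ (x * (C l S S * D l S S)) = r x0 l S S :=
          fun S _ => (tau_CD x l S).trans (hrx l S)
        rw [Finset.sum_congr rfl hstep]
        -- the block trace of a nilpotent block-diagonal matrix vanishes
        set Mx : Matrix (M l) (M l) K := Matrix.of (fun S' S => r x0 l S' S) with hMxdef
        set Pc : Matrix (M l) (M l) K :=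
          Matrix.diagonal (fun S => if deg l S = c then 1 else 0) with hPcdef
        have hMxpow : ∀ n : ℕ,
            Mx ^ (n + 1) = Matrix.of (fun S' S => r (x0 ^ (n + 1)) l S' S) := by
          intro n
          induction n with
          | zero => rw [pow_one, pow_one]
          | succ n ih =>
            rw [pow_succ, ih]
            ext S' S
            rw [Matrix.mul_apply]
            show ∑ S'' : M l, r (x0 ^ (n + 1)) l S' S'' * r x0 l S'' S
              = r (x0 ^ (n + 1 + 1)) l S' S
            rw [← r_mul, ← pow_succ]
        have hcomm : Commute Mx Pc := by
          show Mx * Pc = Pc * Mx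
          ext S' S
          rw [Matrix.mul_diagonal, Matrix.diagonal_mul]
          by_cases h : deg l S' = deg l S
          · rw [h]; ring
          · have hz : Mx S' S = 0 := hblock 0 x0 hx0mem l S' S (by omega)
            rw [hz, zero_mul, mul_zero]
        have hnilM : IsNilpotent (Mx * Pc) := by
          refine ⟨n₀ + 1, ?_⟩
          rw [hcomm.mul_pow, hMxpow n₀, hx0n]
          have hz : Matrix.of (fun S' S => r (0 : A) l S' S) = (0 : Matrix (M l) (M l) K) := by
            ext S' S
            exact r_zero l S S'
          rw [hz, zero_mul]
        have htr0 : Matrix.trace (Mx * Pc) = 0 :=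
          (Matrix.isNilpotent_trace_of_isNilpotent hnilM).eq_zero
        have htr : Matrix.trace (Mx * Pc)
            = ∑ S ∈ Finset.univ.filter (fun S : M l => deg l S = c), r x0 l S S := by
          rw [Finset.sum_filter]
          rw [Matrix.trace]
          refine Finset.sum_congr rfl fun S _ => ?_
          rw [Matrix.diag_apply, Matrix.mul_diagonal]
          by_cases h : deg l S = c
          · rw [if_pos h, if_pos h, mul_one]; rfl
          · rw [if_neg h, if_neg h, mul_zero]
        rw [← htr, htr0]
      · rw [mul_zero, map_zero]
      · intro u v _ _ hu hv; rw [mul_add, map_add, hu, hv, add_zero]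
      · intro k u _ hu; rw [mul_smul_comm, map_smul, hu, smul_zero]
    have h2 := key 1 h1mem
    rwa [mul_one] at h2
  have hJbot : Ideal.jacobson (⊥ : Ideal A) = ⊥ := by
    rw [← hJdef, eq_bot_iff]
    intro x hxJ
    rw [Submodule.mem_bot]
    by_contra hxne
    obtain ⟨b, hb⟩ := hτnd x hxne
    apply hb
    rw [hτsym]
    exact tauJ (b * x) (J.smul_mem b hxJ)
  exact aux_semisimple_of_jacobson_bot hJbot
end

section
/- Let A = ⊕_i M_{n_i}(K) be a finite dimensional semisimple K-algebra with at least one n_i > 1. Then A admits a structure of a graded symmetric cellular algebra with a non-trivial grading (i.e. some homogeneous component of nonzero degree is nonzero) and a homogeneous symmetrizing trace of degree 0. -/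
open scoped Classical
set_option linter.unusedSectionVars false
set_option maxHeartbeats 4000000
set_option synthInstance.maxHeartbeats 1000000

namespace Stmt19Aux

variable {K : Type} [Field K] {ι : Type} [Fintype ι] [DecidableEq ι] (n : ι → ℕ)

abbrev A (K : Type) [Field K] {ι : Type} (n : ι → ℕ) : Type :=
  ∀ i, Matrix (Fin (n i)) (Fin (n i)) K

/-- degree function on rows/columns -/
def d (i : ι) (a : Fin (n i)) : ℤ := 2 * (a : ℤ) - ((n i : ℤ) - 1)

lemma d_rev (i : ι) (a : Fin (n i)) : d n i a.rev = - d n i a := by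
  have h := a.is_lt
  simp only [d, Fin.val_rev]
  have h2 : ((n i - (↑a + 1) : ℕ) : ℤ) = (n i : ℤ) - (a : ℤ) - 1 := by
    push_cast [Nat.cast_sub (by omega : (a : ℕ) + 1 ≤ n i)]; ring
  rw [h2]; ring

/-- the grading -/
def grade (m : ℤ) : Submodule K (A K n) where
  carrier := {x | ∀ i (a b : Fin (n i)), d n i a - d n i b ≠ m → x i a b = 0}
  add_mem' := fun hx hy i a b h => by
    simp only [Pi.add_apply, Matrix.add_apply, hx i a b h, hy i a b h, add_zero]
  zero_mem' := fun i a b h => rfl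
  smul_mem' := fun c x hx i a b h => by
    simp only [Pi.smul_apply, Matrix.smul_apply, hx i a b h, smul_zero]

lemma mem_grade {m : ℤ} {x : A K n} :
    x ∈ grade (K := K) n m ↔ ∀ i (a b : Fin (n i)), d n i a - d n i b ≠ m → x i a b = 0 :=
  Iff.rfl

/-- projection onto degree m component -/
def proj (m : ℤ) : A K n →ₗ[K] A K n where
  toFun x := fun i => Matrix.of fun a b => if d n i a - d n i b = m then x i a b else 0
  map_add' x y := by
    funext i a b
    simp only [Pi.add_apply, Matrix.add_apply, Matrix.of_apply]
    split <;> simp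
  map_smul' c x := by
    funext i a b
    simp only [Pi.smul_apply, Matrix.smul_apply, Matrix.of_apply, RingHom.id_apply]
    split <;> simp

lemma proj_apply (m : ℤ) (x : A K n) (i : ι) (a b : Fin (n i)) :
    proj (K := K) n m x i a b = if d n i a - d n i b = m then x i a b else 0 := rfl

lemma proj_mem (m : ℤ) (x : A K n) : proj (K := K) n m x ∈ grade (K := K) n m := by
  intro i a b h
  simp [proj_apply, h]

lemma proj_eq_self {m : ℤ} {x : A K n} (hx : x ∈ grade (K := K) n m) :
    proj (K := K) n m x = x := by
  funext i a b
  rw [proj_apply]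
  by_cases h : d n i a - d n i b = m
  · rw [if_pos h]
  · rw [if_neg h]; exact (hx i a b h).symm

lemma proj_eq_zero {m m' : ℤ} (hmm : m ≠ m') {x : A K n} (hx : x ∈ grade (K := K) n m') :
    proj (K := K) n m x = 0 := by
  funext i a b
  have h0 : (0 : A K n) i a b = 0 := rfl
  rw [h0, proj_apply]
  by_cases h : d n i a - d n i b = m
  · rw [if_pos h]
    exact hx i a b (by rw [h]; exact hmm)
  · rw [if_neg h]

/-- the finite set of occurring degrees -/
noncomputable def D : Finset ℤ :=
  Finset.image (fun p : Σ i : ι, Fin (n i) × Fin (n i) => d n p.1 p.2.1 - d n p.1 p.2.2)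
    Finset.univ

lemma sum_proj (x : A K n) : ∑ m ∈ D n, proj (K := K) n m x = x := by
  funext i a b
  rw [Finset.sum_apply]
  rw [Matrix.sum_apply]
  simp only [proj_apply]
  rw [Finset.sum_ite_eq (D n) (d n i a - d n i b) (fun _ => x i a b)]
  rw [if_pos]
  exact Finset.mem_image.2 ⟨⟨i, (a, b)⟩, Finset.mem_univ _, rfl⟩

lemma mem_D_of_ne_zero {m : ℤ} {x : A K n} (hx : x ∈ grade (K := K) n m) (hx0 : x ≠ 0) :
    m ∈ D n := by
  by_contra hm
  apply hx0
  funext i a b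
  by_cases h : d n i a - d n i b = m
  · exact absurd (h ▸ Finset.mem_image.2 ⟨⟨i, (a, b)⟩, Finset.mem_univ _, rfl⟩) hm
  · exact hx i a b h

/-- the decomposition map -/
noncomputable def Dec : A K n →ₗ[K] DirectSum ℤ (fun m => ↥(grade (K := K) n m)) :=
  ∑ m ∈ D n, (DirectSum.lof K ℤ (fun m => ↥(grade (K := K) n m)) m).comp
    ((proj (K := K) n m).codRestrict (grade (K := K) n m) (proj_mem n m))

lemma coe_Dec (x : A K n) :
    DirectSum.coeAddMonoidHom (grade (K := K) n) (Dec (K := K) n x) = x := by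
  rw [Dec, LinearMap.sum_apply, map_sum]
  have h1 : ∀ m ∈ D n,
      DirectSum.coeAddMonoidHom (grade (K := K) n)
        (((DirectSum.lof K ℤ (fun m => ↥(grade (K := K) n m)) m).comp
          ((proj (K := K) n m).codRestrict (grade (K := K) n m) (proj_mem n m))) x)
        = proj (K := K) n m x := by
    intro m _
    rw [LinearMap.comp_apply, DirectSum.lof_eq_of, DirectSum.coeAddMonoidHom_of]
    rfl
  rw [Finset.sum_congr rfl h1, sum_proj]

lemma Dec_rightInv :
    Function.RightInverse (DirectSum.coeAddMonoidHom (grade (K := K) n))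
      (Dec (K := K) n) := by
  intro y
  induction y using DirectSum.induction_on with
  | zero =>
    rw [map_zero]
    exact map_zero (Dec (K := K) n)
  | of m' z =>
    rw [DirectSum.coeAddMonoidHom_of]
    obtain ⟨x, hx⟩ := z
    by_cases hx0 : x = 0
    · subst hx0
      have h1 : (⟨0, hx⟩ : ↥(grade (K := K) n m')) = 0 := rfl
      rw [h1, ZeroMemClass.coe_zero, map_zero, map_zero]
    · have hm' : m' ∈ D n := mem_D_of_ne_zero n hx hx0
      rw [Dec, LinearMap.sum_apply]
      rw [Finset.sum_eq_single_of_mem m' hm']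
      · rw [LinearMap.comp_apply, DirectSum.lof_eq_of]
        congr 1
        exact Subtype.ext (proj_eq_self n hx)
      · intro m hm hne
        rw [LinearMap.comp_apply]
        have h2 : (proj (K := K) n m).codRestrict (grade (K := K) n m) (proj_mem n m) x = 0 :=
          Subtype.ext (proj_eq_zero n hne hx)
        rw [h2, map_zero]
  | add u v hu hv =>
    rw [map_add, map_add, hu, hv]

noncomputable def gradedAlg : GradedAlgebra (grade (K := K) n) where
  one_mem := by
    intro i a b h
    have hab : a ≠ b := by rintro rfl; exact h (by ring)
    simp [Matrix.one_apply, hab]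
  mul_mem := by
    intro m m' x y hx hy i a b h
    show ∑ c, x i a c * y i c b = 0
    refine Finset.sum_eq_zero fun c _ => ?_
    by_cases hc : d n i a - d n i c = m
    · rw [hy i c b (by omega), mul_zero]
    · rw [hx i a c hc, zero_mul]
  decompose' := Dec (K := K) n
  left_inv := coe_Dec n
  right_inv := Dec_rightInv n

/-- the cellular basis elements -/
noncomputable def C (l : ι) (S T : Fin (n l)) : A K n :=
  Pi.single l (Matrix.single S T.rev 1)

lemma C_apply_same (l : ι) (S T a b : Fin (n l)) :
    C (K := K) n l S T l a b = if a = S ∧ b = T.rev then 1 else 0 := by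
  rw [C, Pi.single_eq_same]
  simp [Matrix.single, eq_comm]

lemma C_apply_ne {l i : ι} (h : i ≠ l) (S T : Fin (n l)) :
    C (K := K) n l S T i = 0 := Pi.single_eq_of_ne h _

/-- anti-automorphism -/
def starMap : A K n →ₗ[K] A K n where
  toFun x := fun i => Matrix.of fun a b => x i b.rev a.rev
  map_add' x y := by
    funext i a b
    simp only [Pi.add_apply, Matrix.add_apply, Matrix.of_apply]
  map_smul' c x := by
    funext i a b
    simp only [Pi.smul_apply, Matrix.smul_apply, Matrix.of_apply, RingHom.id_apply]

lemma starMap_anti (x y : A K n) :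
    starMap (K := K) n (x * y) = starMap (K := K) n y * starMap (K := K) n x := by
  funext i a b
  have h1 : (starMap (K := K) n (x * y)) i a b
      = ∑ c : Fin (n i), x i b.rev c * y i c a.rev := by
    show (x i * y i) b.rev a.rev = _
    rw [Matrix.mul_apply]
  have h2 : (starMap (K := K) n y * starMap (K := K) n x) i a b
      = ∑ c : Fin (n i), y i c.rev a.rev * x i b.rev c.rev := by
    show ((starMap (K := K) n y) i * (starMap (K := K) n x) i) a b = _
    rw [Matrix.mul_apply]
    rfl
  rw [h1, h2]
  have h3 : ∑ c : Fin (n i), y i c.rev a.rev * x i b.rev c.rev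
      = ∑ c : Fin (n i), y i c a.rev * x i b.rev c :=
    Equiv.sum_comp Fin.revPerm (fun c => y i c a.rev * x i b.rev c)
  rw [h3]
  exact Finset.sum_congr rfl fun c _ => mul_comm _ _

lemma starMap_C (l : ι) (S T : Fin (n l)) :
    starMap (K := K) n (C (K := K) n l S T) = C (K := K) n l T S := by
  funext i a b
  by_cases h : i = l
  · subst h
    show C (K := K) n i S T i b.rev a.rev = C (K := K) n i T S i a b
    rw [C_apply_same, C_apply_same]
    refine if_congr ?_ rfl rfl
    constructor
    · rintro ⟨h1, h2⟩
      exact ⟨Fin.rev_inj.mp h2, by rw [← h1, Fin.rev_rev]⟩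
    · rintro ⟨h1, h2⟩
      exact ⟨by rw [h2, Fin.rev_rev], by rw [h1]⟩
  · show C (K := K) n l S T i b.rev a.rev = C (K := K) n l T S i a b
    rw [C_apply_ne n h, C_apply_ne n h]
    rfl

/-- the basis equivalence -/
def basEquiv : A K n ≃ₗ[K] ((Σ l : ι, Fin (n l) × Fin (n l)) → K) where
  toFun x := fun p => x p.1 p.2.1 p.2.2.rev
  invFun g := fun i => Matrix.of fun a b => g ⟨i, (a, b.rev)⟩
  left_inv x := by
    funext i a b
    show x i a b.rev.rev = x i a b
    rw [Fin.rev_rev]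
  right_inv g := by
    funext p
    obtain ⟨i, a, b⟩ := p
    show g ⟨i, (a, b.rev.rev)⟩ = g ⟨i, (a, b)⟩
    rw [Fin.rev_rev]
  map_add' x y := rfl
  map_smul' c x := rfl

lemma bas_eq (l : ι) (S T : Fin (n l)) :
    Module.Basis.ofEquivFun (basEquiv (K := K) n) ⟨l, (S, T)⟩ = C (K := K) n l S T := by
  rw [Module.Basis.coe_ofEquivFun]
  rw [LinearEquiv.symm_apply_eq]
  funext p
  obtain ⟨i, a, b⟩ := p
  have hb : (basEquiv (K := K) n) (C (K := K) n l S T) ⟨i, (a, b)⟩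
      = C (K := K) n l S T i a b.rev := rfl
  rw [hb]
  by_cases h : i = l
  · subst h
    rw [C_apply_same]
    simp [Pi.single_apply, Sigma.mk.inj_iff, Prod.mk.injEq, Fin.rev_inj]
  · rw [Pi.single_eq_of_ne (fun he => h (congrArg Sigma.fst he)), C_apply_ne n h]
    rfl

/-- the cellular multiplication rule -/
lemma cell_mul (a : A K n) (l : ι) (S T : Fin (n l)) :
    a * C (K := K) n l S T = ∑ S' : Fin (n l), a l S' S • C (K := K) n l S' T := by
  funext i p q
  rw [Finset.sum_apply, Matrix.sum_apply]
  by_cases h : i = l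
  · subst h
    show (a i * C (K := K) n i S T i) p q = _
    rw [Matrix.mul_apply]
    simp only [C_apply_same, Pi.smul_apply, Matrix.smul_apply, smul_eq_mul]
    by_cases hq : q = T.rev
    · simp [hq, mul_ite, Finset.sum_ite_eq, Finset.sum_ite_eq']
    · simp [hq]
  · show (a i * C (K := K) n l S T i) p q = _
    rw [C_apply_ne n h, Matrix.mul_zero, Matrix.zero_apply]
    refine Eq.symm (Finset.sum_eq_zero fun S' _ => ?_)
    simp [Pi.smul_apply, C_apply_ne n h]

lemma C_mem_grade (l : ι) (S T : Fin (n l)) :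
    C (K := K) n l S T ∈ grade (K := K) n (d n l S + d n l T) := by
  intro i a b hab
  by_cases h : i = l
  · subst h
    rw [C_apply_same, if_neg]
    rintro ⟨rfl, rfl⟩
    apply hab
    rw [d_rev]
    ring
  · rw [C_apply_ne n h]
    rfl

/-- the trace -/
noncomputable def tr : A K n →ₗ[K] K where
  toFun x := ∑ i, (x i).trace
  map_add' x y := by simp [Matrix.trace_add, Finset.sum_add_distrib]
  map_smul' c x := by simp [Matrix.trace_smul, Finset.mul_sum, smul_eq_mul]

lemma tr_apply (x : A K n) : tr (K := K) n x = ∑ i, (x i).trace := rfl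

lemma tr_comm (x y : A K n) : tr (K := K) n (x * y) = tr (K := K) n (y * x) := by
  rw [tr_apply, tr_apply]
  exact Finset.sum_congr rfl fun i _ => Matrix.trace_mul_comm (x i) (y i)

lemma tr_faithful (x : A K n) (hx : x ≠ 0) : ∃ b, tr (K := K) n (x * b) ≠ 0 := by
  have hex : ∃ i p q, x i p q ≠ 0 := by
    by_contra hc
    push_neg at hc
    exact hx (funext fun i => Matrix.ext fun p q => hc i p q)
  obtain ⟨i, p, q, hpq⟩ := hex
  refine ⟨Pi.single i (Matrix.single q p 1), ?_⟩
  have h1 : tr (K := K) n (x * Pi.single i (Matrix.single q p 1)) = x i p q := by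
    have hz : ∀ j, j ≠ i →
        ((x * (Pi.single i (Matrix.single q p 1) : A K n)) j).trace = 0 := by
      intro j hj
      rw [Pi.mul_apply, Pi.single_eq_of_ne hj, Matrix.mul_zero, Matrix.trace_zero]
    rw [tr_apply, Fintype.sum_eq_single i hz, Pi.mul_apply, Pi.single_eq_same]
    simp [Matrix.trace, Matrix.diag, Matrix.mul_apply, Matrix.single,
      mul_ite, mul_one, mul_zero, ite_and, Finset.sum_ite_eq, Finset.sum_ite_eq']
  rw [h1]
  exact hpq

lemma tr_grade {m : ℤ} (hm : m ≠ 0) {x : A K n} (hx : x ∈ grade (K := K) n m) :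
    tr (K := K) n x = 0 := by
  rw [tr_apply]
  refine Finset.sum_eq_zero fun i _ => ?_
  rw [Matrix.trace]
  refine Finset.sum_eq_zero fun a _ => ?_
  show x i a a = 0
  exact hx i a a (by rw [sub_self]; exact fun h0 => hm h0.symm)

def discretePO (α : Type) : PartialOrder α where
  le a b := a = b
  le_refl _ := rfl
  le_trans _ _ _ h h' := Eq.trans h h'
  le_antisymm _ _ h _ := h

end Stmt19Aux

/-- Proposition 5.3: a finite dimensional semisimple algebra `A = ⊕ M_{nᵢ}(K)` with
some `nᵢ > 1` admits a structure of graded symmetric cellular algebra with a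
non-trivial grading and a homogeneous symmetrizing trace of degree `0`. -/
theorem stmt19 {K : Type} [Field K] {ι : Type} [Fintype ι] [DecidableEq ι]
    (n : ι → ℕ) (hn : ∀ i, 1 ≤ n i) (hbig : ∃ i, 1 < n i) :
    ∃ 𝒜 : ℤ → Submodule K (∀ i, Matrix (Fin (n i)) (Fin (n i)) K),
      Nonempty (GradedAlgebra 𝒜) ∧
      (∃ m : ℤ, m ≠ 0 ∧ 𝒜 m ≠ ⊥) ∧
      ∃ (Λ : Type) (po : PartialOrder Λ) (_ : Fintype Λ)
        (M : Λ → Type) (fM : ∀ l : Λ, Fintype (M l))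
        (C : ∀ l : Λ, M l → M l → (∀ i, Matrix (Fin (n i)) (Fin (n i)) K))
        (bas : Module.Basis (Σ l : Λ, M l × M l) K (∀ i, Matrix (Fin (n i)) (Fin (n i)) K)),
        (∀ (l : Λ) (S T : M l), bas ⟨l, (S, T)⟩ = C l S T) ∧
        (∃ star : (∀ i, Matrix (Fin (n i)) (Fin (n i)) K) →ₗ[K]
            (∀ i, Matrix (Fin (n i)) (Fin (n i)) K),
          (∀ a b, star (a * b) = star b * star a) ∧
          (∀ (l : Λ) (S T : M l), star (C l S T) = C l T S)) ∧
        (∀ (a : ∀ i, Matrix (Fin (n i)) (Fin (n i)) K) (l : Λ),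
          ∃ r : M l → M l → K, ∀ S T : M l,
            a * C l S T - ∑ S' ∈ (fM l).elems, r S' S • C l S' T ∈
              Submodule.span K
                {x : ∀ i, Matrix (Fin (n i)) (Fin (n i)) K |
                  ∃ μ : Λ, po.lt μ l ∧ ∃ U V : M μ, x = C μ U V}) ∧
        (∃ deg : ∀ l : Λ, M l → ℤ,
          ∀ (l : Λ) (S T : M l), C l S T ∈ 𝒜 (deg l S + deg l T)) ∧
        (∃ τ : (∀ i, Matrix (Fin (n i)) (Fin (n i)) K) →ₗ[K] K,
          (∀ a b, τ (a * b) = τ (b * a)) ∧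
          (∀ a, a ≠ 0 → ∃ b, τ (a * b) ≠ 0) ∧
          (∀ m : ℤ, m ≠ 0 → ∀ a ∈ 𝒜 m, τ a = 0)) := by
  obtain ⟨i0, hi0⟩ := hbig
  refine ⟨Stmt19Aux.grade (K := K) n, ⟨Stmt19Aux.gradedAlg n⟩, ?_, ι,
    Stmt19Aux.discretePO ι, inferInstance, fun l => Fin (n l), fun l => inferInstance,
    Stmt19Aux.C (K := K) n, Module.Basis.ofEquivFun (Stmt19Aux.basEquiv (K := K) n),
    fun l S T => Stmt19Aux.bas_eq n l S T,
    ⟨Stmt19Aux.starMap (K := K) n, Stmt19Aux.starMap_anti n, Stmt19Aux.starMap_C n⟩,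
    ?_,
    ⟨fun l S => Stmt19Aux.d n l S, fun l S T => Stmt19Aux.C_mem_grade n l S T⟩,
    ⟨Stmt19Aux.tr (K := K) n, Stmt19Aux.tr_comm n,
      fun a ha => Stmt19Aux.tr_faithful n a ha,
      fun m hm a ha => Stmt19Aux.tr_grade n hm ha⟩⟩
  · -- the grading is nontrivial
    refine ⟨2, by norm_num, ?_⟩
    rw [Submodule.ne_bot_iff]
    refine ⟨(Pi.single i0 (Matrix.single ⟨1, hi0⟩ ⟨0, by omega⟩ 1) :
      ∀ i, Matrix (Fin (n i)) (Fin (n i)) K), ?_, ?_⟩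
    · intro i a b hab
      by_cases h : i = i0
      · subst h
        rw [Pi.single_eq_same]
        simp only [Matrix.single, Matrix.of_apply]
        rw [if_neg]
        rintro ⟨rfl, rfl⟩
        apply hab
        rw [Stmt19Aux.d, Stmt19Aux.d]
        show (2 * ((1 : ℕ) : ℤ) - ((n i : ℤ) - 1))
            - (2 * ((0 : ℕ) : ℤ) - ((n i : ℤ) - 1)) = 2
        push_cast
        ring
      · rw [Pi.single_eq_of_ne h]
        rfl
    · intro h0
      have h1 : (Pi.single i0 (Matrix.single (⟨1, hi0⟩ : Fin (n i0))
          ⟨0, by omega⟩ 1) : ∀ i, Matrix (Fin (n i)) (Fin (n i)) K) i0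
          ⟨1, hi0⟩ ⟨0, by omega⟩ = 0 := by rw [h0]; rfl
      rw [Pi.single_eq_same] at h1
      simp [Matrix.single] at h1
  · -- cellularity
    intro a l
    refine ⟨fun S' S => a l S' S, fun S T => ?_⟩
    have h0 : a * Stmt19Aux.C (K := K) n l S T -
        ∑ S' ∈ Finset.univ, a l S' S • Stmt19Aux.C (K := K) n l S' T = 0 := by
      rw [sub_eq_zero]
      exact Stmt19Aux.cell_mul n a l S T
    show a * Stmt19Aux.C (K := K) n l S T -
        ∑ S' ∈ Finset.univ, a l S' S • Stmt19Aux.C (K := K) n l S' T ∈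
          Submodule.span K _
    rw [h0]
    exact Submodule.zero_mem _
end
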